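/- arXiv:1902.08685 — 6 statements merged into one kernel-verified Lean document; each statement's English description precedes it below -/
import Mathlib

section
/- Let t₀ ≥ 0 and a, b, c > 0. Let y : [t₀, ∞) → ℝ be continuous and nonnegative, and let g : [0, ∞) → ℝ be positive and nondecreasing. Suppose that y(t) ≤ a·t + b + c·∫_{t₀}^{t} g(y(s)) ds for all t ≥ t₀. Fix η > 0 and define G(u) = ∫_η^u ds/g(s) for u ≥ 0. Then for every t ≥ t₀ one has G(y(t)) ≤ G(a·t₀ + b) + (a/g(a·t₀ + b) + c)·(t − t₀). In particular, since G is strictly increasing, y(t) ≤ G⁻¹( G(a·t₀ + b) + (a/g(a·t₀ + b) + c)·(t − t₀) ) whenever the argument lies in the range of G. -/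
open MeasureTheory intervalIntegral Filter

private lemma gronwall_alg (a c Δ g0 g1 g2 zd I : ℝ) (ha : 0 ≤ a) (hc : 0 ≤ c) (hΔ : 0 ≤ Δ)
    (h0 : 0 < g0) (h01 : g0 ≤ g1) (h12 : g1 ≤ g2) (hzd : zd = a * Δ + c * I)
    (hI : I ≤ Δ * g2) :
    zd * (1 / g1) ≤ (a / g0 + c) * Δ + c / g0 * Δ * (g2 - g1) := by
  have h1 : 0 < g1 := h0.trans_le h01
  rw [hzd, mul_one_div, div_le_iff₀ h1]
  have key : ((a / g0 + c) * Δ + c / g0 * Δ * (g2 - g1)) * g1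
      = (a * Δ * g1 + c * Δ * g0 * g1 + c * Δ * (g2 - g1) * g1) / g0 := by
    field_simp
  rw [key, le_div_iff₀ h0]
  nlinarith [mul_nonneg (mul_nonneg hc hΔ) (mul_nonneg (sub_nonneg.2 h12) (sub_nonneg.2 h01)),
    mul_nonneg (mul_nonneg ha hΔ) (sub_nonneg.2 h01),
    mul_nonneg (mul_nonneg hc h0.le) (sub_nonneg.2 hI)]

/-- Nonlinear Grönwall-type inequality: if a nonnegative continuous `y` satisfies
`y t ≤ a*t + b + c*∫_{t₀}^t g(y s) ds` for all `t ≥ t₀`, with `g` positive and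
nondecreasing on `[0,∞)`, then with `G u = ∫_η^u ds / g s` one has
`G (y t) ≤ G (a*t₀ + b) + (a / g (a*t₀ + b) + c) * (t - t₀)` for all `t ≥ t₀`. -/
theorem nonlinear_gronwall
    (t₀ a b c η : ℝ) (ht₀ : 0 ≤ t₀) (ha : 0 < a) (hb : 0 < b) (hc : 0 < c) (hη : 0 < η)
    (y g : ℝ → ℝ)
    (hy_cont : ContinuousOn y (Set.Ici t₀))
    (hy_nonneg : ∀ t ∈ Set.Ici t₀, 0 ≤ y t)
    (hg_pos : ∀ s ∈ Set.Ici (0:ℝ), 0 < g s)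
    (hg_mono : MonotoneOn g (Set.Ici (0:ℝ)))
    (hineq : ∀ t ∈ Set.Ici t₀, y t ≤ a * t + b + c * ∫ s in t₀..t, g (y s))
    (G : ℝ → ℝ) (hG : ∀ u, G u = ∫ s in η..u, 1 / g s) :
    ∀ t ∈ Set.Ici t₀,
      G (y t) ≤ G (a * t₀ + b) + (a / g (a * t₀ + b) + c) * (t - t₀) := by
  have hz₀pos : 0 < a * t₀ + b := by positivity
  set z₀ : ℝ := a * t₀ + b with hz₀def
  set K : ℝ := a / g z₀ + c with hKdef
  have hgz₀ : 0 < g z₀ := hg_pos z₀ hz₀pos.le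
  -- monotone extension of g
  set gm : ℝ → ℝ := fun x => g (max x 0) with hgmdef
  have hgm_mono : Monotone gm := fun u v huv =>
    hg_mono (Set.mem_Ici.2 (le_max_right u 0)) (Set.mem_Ici.2 (le_max_right v 0))
      (max_le_max huv le_rfl)
  have hgm_meas : Measurable gm := hgm_mono.measurable
  -- antitonicity and integrability of 1/g
  have hginv_anti : AntitoneOn (fun s => 1 / g s) (Set.Ici (0:ℝ)) := by
    intro u hu v hv huv
    exact one_div_le_one_div_of_le (hg_pos u hu) (hg_mono hu hv huv)
  have hginv_int : ∀ u v : ℝ, 0 ≤ u → 0 ≤ v →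
      IntervalIntegrable (fun s => 1 / g s) volume u v := by
    intro u v hu hv
    exact (hginv_anti.mono (fun x hx => le_trans (le_min hu hv) hx.1)).intervalIntegrable
  -- integrability of g ∘ y on subintervals of [t₀, ∞)
  have hint_gy : ∀ τ₁ τ₂, t₀ ≤ τ₁ → τ₁ ≤ τ₂ →
      IntervalIntegrable (fun s => g (y s)) volume τ₁ τ₂ := by
    intro τ₁ τ₂ h1 h2
    rw [intervalIntegrable_iff_integrableOn_Ioc_of_le h2]
    have hsub : Set.Ioc τ₁ τ₂ ⊆ Set.Ici t₀ := fun x hx => le_trans h1 hx.1.le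
    have hyIcc : ContinuousOn y (Set.Icc τ₁ τ₂) :=
      hy_cont.mono (fun x hx => le_trans h1 hx.1)
    obtain ⟨M, hM⟩ := isCompact_Icc.exists_bound_of_continuousOn hyIcc
    haveI : IsFiniteMeasure (volume.restrict (Set.Ioc τ₁ τ₂)) :=
      ⟨by rw [Measure.restrict_apply_univ]; exact measure_Ioc_lt_top⟩
    have hy_aem : AEMeasurable y (volume.restrict (Set.Ioc τ₁ τ₂)) :=
      (hy_cont.mono hsub).aemeasurable measurableSet_Ioc
    have haesm0 : AEStronglyMeasurable (fun s => gm (y s)) (volume.restrict (Set.Ioc τ₁ τ₂)) :=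
      (hgm_meas.comp_aemeasurable hy_aem).aestronglyMeasurable
    have haesm : AEStronglyMeasurable (fun s => g (y s)) (volume.restrict (Set.Ioc τ₁ τ₂)) := by
      apply haesm0.congr
      filter_upwards [ae_restrict_mem measurableSet_Ioc] with x hx
      simp only [hgmdef]
      rw [max_eq_left (hy_nonneg x (hsub hx))]
    refine ⟨haesm, ?_⟩
    apply HasFiniteIntegral.of_bounded (C := gm M)
    filter_upwards [ae_restrict_mem measurableSet_Ioc] with x hx
    have hx0 : 0 ≤ y x := hy_nonneg x (hsub hx)
    have hyx : y x ≤ M := le_trans (le_abs_self _) (hM x (Set.Ioc_subset_Icc_self hx))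
    have hgyx : 0 < g (y x) := hg_pos _ hx0
    have : g (y x) = gm (y x) := by simp only [hgmdef]; rw [max_eq_left hx0]
    rw [Real.norm_eq_abs, abs_of_pos hgyx, this]
    exact hgm_mono hyx
  have hint_nonneg : ∀ τ₁ τ₂, t₀ ≤ τ₁ → τ₁ ≤ τ₂ → 0 ≤ ∫ s in τ₁..τ₂, g (y s) := by
    intro τ₁ τ₂ h1 h2
    exact intervalIntegral.integral_nonneg h2 fun s hs =>
      (hg_pos (y s) (hy_nonneg s (le_trans h1 hs.1))).le
  -- the comparison function z
  set z : ℝ → ℝ := fun τ => a * τ + b + c * ∫ s in t₀..τ, g (y s) with hzdef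
  have hz_t₀ : z t₀ = z₀ := by simp [hzdef, hz₀def]
  have hz_split : ∀ τ₁ τ₂, t₀ ≤ τ₁ → τ₁ ≤ τ₂ →
      z τ₂ - z τ₁ = a * (τ₂ - τ₁) + c * ∫ s in τ₁..τ₂, g (y s) := by
    intro τ₁ τ₂ h1 h2
    have h3 : (∫ s in t₀..τ₁, g (y s)) + ∫ s in τ₁..τ₂, g (y s) = ∫ s in t₀..τ₂, g (y s) :=
      intervalIntegral.integral_add_adjacent_intervals (hint_gy t₀ τ₁ le_rfl h1)
        (hint_gy τ₁ τ₂ h1 h2)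
    simp only [hzdef, ← h3]; ring
  have hz_mono : ∀ τ₁ τ₂, t₀ ≤ τ₁ → τ₁ ≤ τ₂ → z τ₁ ≤ z τ₂ := by
    intro τ₁ τ₂ h1 h2
    nlinarith [hz_split τ₁ τ₂ h1 h2, mul_nonneg hc.le (hint_nonneg τ₁ τ₂ h1 h2),
      mul_nonneg ha.le (sub_nonneg.2 h2)]
  have hz_ge : ∀ τ, t₀ ≤ τ → z₀ ≤ z τ := fun τ hτ => hz_t₀ ▸ hz_mono t₀ τ le_rfl hτ
  have hz_pos : ∀ τ, t₀ ≤ τ → 0 < z τ := fun τ hτ => lt_of_lt_of_le hz₀pos (hz_ge τ hτ)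
  -- difference formula and monotonicity for G
  have hGdiff : ∀ u v : ℝ, 0 ≤ u → 0 ≤ v → G v - G u = ∫ s in u..v, 1 / g s := by
    intro u v hu hv
    rw [hG v, hG u,
      ← intervalIntegral.integral_add_adjacent_intervals (hginv_int η u hη.le hu)
        (hginv_int u v hu hv)]
    ring
  have hG_mono : ∀ u v : ℝ, 0 ≤ u → u ≤ v → G u ≤ G v := by
    intro u v hu huv
    have h0 : 0 ≤ ∫ s in u..v, 1 / g s :=
      intervalIntegral.integral_nonneg huv fun s hs =>
        (one_div_pos.2 (hg_pos s (hu.trans hs.1))).le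
    have := hGdiff u v hu (hu.trans huv)
    linarith
  -- key per-interval step estimate
  have hstep : ∀ τ₁ τ₂, t₀ ≤ τ₁ → τ₁ ≤ τ₂ →
      G (z τ₂) - G (z τ₁) ≤ K * (τ₂ - τ₁) + c / g z₀ * (τ₂ - τ₁) * (g (z τ₂) - g (z τ₁)) := by
    intro τ₁ τ₂ h1 h2
    have h1' : t₀ ≤ τ₂ := h1.trans h2
    have hz1 : 0 < z τ₁ := hz_pos τ₁ h1
    have hz2 : 0 < z τ₂ := hz_pos τ₂ h1'
    have hz12 : z τ₁ ≤ z τ₂ := hz_mono τ₁ τ₂ h1 h2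
    have hgz1 : 0 < g (z τ₁) := hg_pos _ hz1.le
    have hgz01 : g z₀ ≤ g (z τ₁) := hg_mono hz₀pos.le hz1.le (hz_ge τ₁ h1)
    have hgz12 : g (z τ₁) ≤ g (z τ₂) := hg_mono hz1.le hz2.le hz12
    rw [hGdiff _ _ hz1.le hz2.le]
    have e1 : (∫ s in z τ₁..z τ₂, 1 / g s) ≤ (z τ₂ - z τ₁) * (1 / g (z τ₁)) := by
      have h1le : (∫ s in z τ₁..z τ₂, 1 / g s) ≤ ∫ _s in z τ₁..z τ₂, 1 / g (z τ₁) :=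
        intervalIntegral.integral_mono_on hz12 (hginv_int _ _ hz1.le hz2.le)
          intervalIntegrable_const
          (fun s hs => one_div_le_one_div_of_le hgz1 (hg_mono hz1.le (hz1.le.trans hs.1) hs.1))
      rw [intervalIntegral.integral_const, smul_eq_mul] at h1le
      exact h1le
    have e2 : (∫ s in τ₁..τ₂, g (y s)) ≤ (τ₂ - τ₁) * g (z τ₂) := by
      have : (∫ s in τ₁..τ₂, g (y s)) ≤ ∫ _s in τ₁..τ₂, g (z τ₂) := by
        apply intervalIntegral.integral_mono_on h2 (hint_gy τ₁ τ₂ h1 h2) intervalIntegrable_const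
        intro s hs
        have hs0 : t₀ ≤ s := le_trans h1 hs.1
        have hys : y s ≤ z τ₂ := (hineq s hs0).trans (hz_mono s τ₂ hs0 hs.2)
        exact hg_mono (hy_nonneg s hs0) hz2.le hys
      rwa [intervalIntegral.integral_const, smul_eq_mul] at this
    refine le_trans e1 ?_
    exact gronwall_alg a c (τ₂ - τ₁) (g z₀) (g (z τ₁)) (g (z τ₂)) (z τ₂ - z τ₁)
      (∫ s in τ₁..τ₂, g (y s)) ha.le hc.le (sub_nonneg.2 h2) hgz₀ hgz01 hgz12
      (hz_split τ₁ τ₂ h1 h2) e2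
  -- main argument
  intro t ht
  have ht' : t₀ ≤ t := ht
  have hzt : 0 < z t := hz_pos t ht'
  have hgzt : g z₀ ≤ g (z t) := hg_mono hz₀pos.le hzt.le (hz_ge t ht')
  set C : ℝ := c / g z₀ * (t - t₀) * (g (z t) - g z₀) with hCdef
  have hC : 0 ≤ C := by
    apply mul_nonneg (mul_nonneg (div_nonneg hc.le hgz₀.le) (sub_nonneg.2 ht'))
    linarith
  have key : ∀ n : ℕ, 0 < n → G (z t) - G z₀ ≤ K * (t - t₀) + C * (1 / n) := by
    intro n hn
    have hn' : (0:ℝ) < n := Nat.cast_pos.2 hn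
    set Δ : ℝ := (t - t₀) / n with hΔdef
    have hΔ0 : 0 ≤ Δ := div_nonneg (sub_nonneg.2 ht') hn'.le
    set u : ℕ → ℝ := fun i => t₀ + i * Δ with hudef
    have hu0 : u 0 = t₀ := by simp [hudef]
    have hun : u n = t := by
      simp only [hudef, hΔdef]
      field_simp
      ring
    have hdiff : ∀ i : ℕ, u (i + 1) = u i + Δ := by
      intro i; simp only [hudef]; push_cast; ring
    have humem : ∀ i : ℕ, t₀ ≤ u i := by
      intro i
      simp only [hudef]
      have : 0 ≤ (i : ℝ) * Δ := mul_nonneg i.cast_nonneg hΔ0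
      linarith
    have htel : G (z t) - G z₀ = ∑ i ∈ Finset.range n, (G (z (u (i+1))) - G (z (u i))) := by
      rw [Finset.sum_range_sub (fun i => G (z (u i))), hun, hu0, hz_t₀]
    have htel2 : g (z t) - g z₀ = ∑ i ∈ Finset.range n, (g (z (u (i+1))) - g (z (u i))) := by
      rw [Finset.sum_range_sub (fun i => g (z (u i))), hun, hu0, hz_t₀]
    have hsum : G (z t) - G z₀ ≤
        ∑ i ∈ Finset.range n, (K * Δ + c / g z₀ * Δ * (g (z (u (i+1))) - g (z (u i)))) := by
      rw [htel]
      apply Finset.sum_le_sum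
      intro i _
      have h2 : u i ≤ u (i + 1) := by rw [hdiff]; linarith
      have := hstep (u i) (u (i+1)) (humem i) h2
      have hΔeq : u (i+1) - u i = Δ := by rw [hdiff]; ring
      rwa [hΔeq] at this
    rw [Finset.sum_add_distrib, Finset.sum_const, ← Finset.mul_sum, ← htel2,
      Finset.card_range, nsmul_eq_mul] at hsum
    have hnΔ : (n : ℝ) * (K * Δ) = K * (t - t₀) := by
      rw [hΔdef]; field_simp
    have hCΔ : c / g z₀ * Δ * (g (z t) - g z₀) = C * (1 / n) := by
      rw [hCdef, hΔdef]; field_simp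
    rw [hnΔ, hCΔ] at hsum
    exact hsum
  have hyz : G (y t) ≤ G (z t) := hG_mono _ _ (hy_nonneg t ht) (hineq t ht)
  have hfinal : ∀ᶠ n : ℕ in atTop, G (y t) ≤ G z₀ + K * (t - t₀) + C * (1 / n) := by
    filter_upwards [eventually_gt_atTop 0] with n hn
    have := key n hn
    linarith
  have htend : Tendsto (fun n : ℕ => G z₀ + K * (t - t₀) + C * (1 / n)) atTop
      (nhds (G z₀ + K * (t - t₀) + C * 0)) :=
    tendsto_const_nhds.add (tendsto_const_nhds.mul tendsto_one_div_atTop_nhds_zero_nat)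
  have := ge_of_tendsto htend hfinal
  rw [mul_zero, add_zero] at this
  exact this
end

section
/- Let h be a classical periodic solution of the regularized Model I equation on [0,T]. Then the function E(t) = (1/2)·∫_{−a}^{a} ( h(x,t)² + h_x(x,t)² ) dx is differentiable on [0,T] and satisfies, for every t ∈ [0,T], E′(t) + S·∫_{−a}^{a} (|h|³ + ε)·h_xxx² dx = −(1/2)·∫_{−a}^{a} h²·h_xxx dx + S·∫_{−a}^{a} (|h|³ + ε)·h_x² dx. -/
open MeasureTheory intervalIntegral Set Filter Topology

private lemma periodic_deriv'' {g g' : ℝ → ℝ} {c : ℝ} (hper : ∀ x, g (x + c) = g x)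
    (hd : ∀ x, HasDerivAt g (g' x) x) : ∀ x, g' (x + c) = g' x := by
  intro x
  have h1 : HasDerivAt (fun y => g (y + c)) (g' (x + c) * 1) x :=
    (hd (x + c)).comp x ((hasDerivAt_id x).add_const c)
  have h2 : HasDerivAt g (g' (x + c) * 1) x := by
    have he : (fun y => g (y + c)) = g := funext hper
    rwa [he] at h1
  simpa using h2.unique (hd x)


/-- A classical periodic solution of the regularized Model I equation
`h_t = -h h_x - S ∂_x[(|h|³+ε)(h_x+h_xxx)]` on `ℝ × [0,T]`, `2a`-periodic in `x`,
with continuous partial derivatives `∂_x^j h`, `0 ≤ j ≤ 4`, and `∂_t h`. -/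
structure ClassicalSolutionI (a S ε T : ℝ) (h hx hxx hxxx hxxxx ht : ℝ → ℝ → ℝ) : Prop where
  periodic_x : ∀ x t, h (x + 2 * a) t = h x t
  cont_h : ContinuousOn (fun p : ℝ × ℝ => h p.1 p.2) (Set.univ ×ˢ Set.Icc 0 T)
  cont_hx : ContinuousOn (fun p : ℝ × ℝ => hx p.1 p.2) (Set.univ ×ˢ Set.Icc 0 T)
  cont_hxx : ContinuousOn (fun p : ℝ × ℝ => hxx p.1 p.2) (Set.univ ×ˢ Set.Icc 0 T)
  cont_hxxx : ContinuousOn (fun p : ℝ × ℝ => hxxx p.1 p.2) (Set.univ ×ˢ Set.Icc 0 T)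
  cont_hxxxx : ContinuousOn (fun p : ℝ × ℝ => hxxxx p.1 p.2) (Set.univ ×ˢ Set.Icc 0 T)
  cont_ht : ContinuousOn (fun p : ℝ × ℝ => ht p.1 p.2) (Set.univ ×ˢ Set.Icc 0 T)
  deriv_hx : ∀ x : ℝ, ∀ t ∈ Set.Icc (0:ℝ) T, HasDerivAt (fun y => h y t) (hx x t) x
  deriv_hxx : ∀ x : ℝ, ∀ t ∈ Set.Icc (0:ℝ) T, HasDerivAt (fun y => hx y t) (hxx x t) x
  deriv_hxxx : ∀ x : ℝ, ∀ t ∈ Set.Icc (0:ℝ) T, HasDerivAt (fun y => hxx y t) (hxxx x t) x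
  deriv_hxxxx : ∀ x : ℝ, ∀ t ∈ Set.Icc (0:ℝ) T, HasDerivAt (fun y => hxxx y t) (hxxxx x t) x
  deriv_ht : ∀ x : ℝ, ∀ t ∈ Set.Icc (0:ℝ) T,
    HasDerivWithinAt (fun s => h x s) (ht x t) (Set.Icc 0 T) t
  /-- The PDE `h_t = -h h_x - S ∂_x[(|h|³+ε)(h_x+h_xxx)]`, stated as: the flux
  `S (|h|³+ε)(h_x+h_xxx)` has spatial derivative `-h_t - h h_x`. -/
  pde : ∀ x : ℝ, ∀ t ∈ Set.Icc (0:ℝ) T,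
    HasDerivAt (fun y => S * ((|h y t| ^ 3 + ε) * (hx y t + hxxx y t)))
      (-(ht x t) - h x t * hx x t) x

/-- Energy identity for regularized Model I: with
`E t = (1/2)∫ (h² + h_x²) dx`, one has
`E' + S∫(|h|³+ε)h_xxx² = -(1/2)∫ h² h_xxx + S∫(|h|³+ε)h_x²`. -/
theorem modelI_energy_identity
    (a S ε T : ℝ) (ha : 0 < a) (hS : 0 < S) (hε : 0 < ε) (hT : 0 < T)
    (h hx hxx hxxx hxxxx ht : ℝ → ℝ → ℝ)
    (hsol : ClassicalSolutionI a S ε T h hx hxx hxxx hxxxx ht) :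
    ∀ t ∈ Set.Icc (0:ℝ) T,
      HasDerivWithinAt (fun s => (1/2) * ∫ x in (-a)..a, ((h x s)^2 + (hx x s)^2))
        (-(S * ∫ x in (-a)..a, (|h x t| ^ 3 + ε) * (hxxx x t)^2)
          - (1/2) * (∫ x in (-a)..a, (h x t)^2 * hxxx x t)
          + S * ∫ x in (-a)..a, (|h x t| ^ 3 + ε) * (hx x t)^2)
        (Set.Icc 0 T) t := by
  intro t₀ ht₀
  have hnaa : (-a : ℝ) ≤ a := by linarith
  -- continuity in x at each fixed time in [0,T]
  have ch : ∀ t ∈ Set.Icc (0:ℝ) T, Continuous fun x => h x t := fun t htt =>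
    Differentiable.continuous fun x => (hsol.deriv_hx x t htt).differentiableAt
  have chx : ∀ t ∈ Set.Icc (0:ℝ) T, Continuous fun x => hx x t := fun t htt =>
    Differentiable.continuous fun x => (hsol.deriv_hxx x t htt).differentiableAt
  have chxx : ∀ t ∈ Set.Icc (0:ℝ) T, Continuous fun x => hxx x t := fun t htt =>
    Differentiable.continuous fun x => (hsol.deriv_hxxx x t htt).differentiableAt
  have chxxx : ∀ t ∈ Set.Icc (0:ℝ) T, Continuous fun x => hxxx x t := fun t htt =>
    Differentiable.continuous fun x => (hsol.deriv_hxxxx x t htt).differentiableAt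
  have cht : ∀ t ∈ Set.Icc (0:ℝ) T, Continuous fun x => ht x t := by
    intro t htt
    exact hsol.cont_ht.comp_continuous (continuous_id.prodMk continuous_const)
      fun x => ⟨trivial, htt⟩
  -- periodicity
  have perh : ∀ t x, h (x + 2*a) t = h x t := fun t x => hsol.periodic_x x t
  have perhx : ∀ t ∈ Set.Icc (0:ℝ) T, ∀ x, hx (x + 2*a) t = hx x t := fun t htt =>
    periodic_deriv'' (fun x => hsol.periodic_x x t) (fun x => hsol.deriv_hx x t htt)
  have perhxx : ∀ t ∈ Set.Icc (0:ℝ) T, ∀ x, hxx (x + 2*a) t = hxx x t := fun t htt =>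
    periodic_deriv'' (perhx t htt) (fun x => hsol.deriv_hxx x t htt)
  have perhxxx : ∀ t ∈ Set.Icc (0:ℝ) T, ∀ x, hxxx (x + 2*a) t = hxxx x t := fun t htt =>
    periodic_deriv'' (perhxx t htt) (fun x => hsol.deriv_hxxx x t htt)
  have haa : -a + 2*a = a := by ring
  have eh : ∀ t, h a t = h (-a) t := by
    intro t; have := perh t (-a); rwa [haa] at this
  have ehx : ∀ t ∈ Set.Icc (0:ℝ) T, hx a t = hx (-a) t := by
    intro t htt; have := perhx t htt (-a); rwa [haa] at this
  have ehxx : ∀ t ∈ Set.Icc (0:ℝ) T, hxx a t = hxx (-a) t := by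
    intro t htt; have := perhxx t htt (-a); rwa [haa] at this
  have ehxxx : ∀ t ∈ Set.Icc (0:ℝ) T, hxxx a t = hxxx (-a) t := by
    intro t htt; have := perhxxx t htt (-a); rwa [haa] at this
  ---------------------------------------------------------------
  -- STEP A : HasDerivWithinAt E L0 where L0 = ∫ ht (h - hxx)
  ---------------------------------------------------------------
  -- difference identity
  have hEdiff : ∀ t ∈ Set.Icc (0:ℝ) T,
      (1/2) * (∫ x in (-a)..a, ((h x t)^2 + (hx x t)^2))
        - (1/2) * (∫ x in (-a)..a, ((h x t₀)^2 + (hx x t₀)^2))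
      = 2⁻¹ * ∫ x in (-a)..a,
          (h x t - h x t₀) * (h x t + h x t₀ - hxx x t - hxx x t₀) := by
    intro t htt
    have hu : ∀ x ∈ uIcc (-a) a, HasDerivAt (fun y => h y t - h y t₀)
        (hx x t - hx x t₀) x := fun x _ =>
      (hsol.deriv_hx x t htt).sub (hsol.deriv_hx x t₀ ht₀)
    have hv : ∀ x ∈ uIcc (-a) a, HasDerivAt (fun y => hx y t + hx y t₀)
        (hxx x t + hxx x t₀) x := fun x _ =>
      (hsol.deriv_hxx x t htt).add (hsol.deriv_hxx x t₀ ht₀)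
    have ibp := integral_mul_deriv_eq_deriv_mul hu hv
      (((chx t htt).sub (chx t₀ ht₀)).intervalIntegrable _ _)
      (((chxx t htt).add (chxx t₀ ht₀)).intervalIntegrable _ _)
    -- ibp : ∫ (h t - h t₀)*(hxx t + hxx t₀) = bdry - ∫ (hx t - hx t₀)*(hx t + hx t₀)
    have hbdry : (h a t - h a t₀) * (hx a t + hx a t₀)
        - (h (-a) t - h (-a) t₀) * (hx (-a) t + hx (-a) t₀) = 0 := by
      rw [eh t, eh t₀, ehx t htt, ehx t₀ ht₀]; ring
    have B1 : (∫ x in (-a)..a, (((h x t)^2 + (hx x t)^2) - ((h x t₀)^2 + (hx x t₀)^2)))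
        = (∫ x in (-a)..a, (h x t - h x t₀) * (h x t + h x t₀))
          + ∫ x in (-a)..a, (hx x t - hx x t₀) * (hx x t + hx x t₀) := by
      rw [← integral_add (f := fun x => (h x t - h x t₀) * (h x t + h x t₀))
        (g := fun x => (hx x t - hx x t₀) * (hx x t + hx x t₀))
        ((((ch t htt).sub (ch t₀ ht₀)).mul ((ch t htt).add (ch t₀ ht₀))).intervalIntegrable _ _)
        ((((chx t htt).sub (chx t₀ ht₀)).mul ((chx t htt).add (chx t₀ ht₀))).intervalIntegrable _ _)]
      exact integral_congr fun x _ => by ring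
    have B2 : (∫ x in (-a)..a, (h x t - h x t₀) * (h x t + h x t₀))
          - (∫ x in (-a)..a, (h x t - h x t₀) * (hxx x t + hxx x t₀))
        = ∫ x in (-a)..a,
            (h x t - h x t₀) * (h x t + h x t₀ - hxx x t - hxx x t₀) := by
      rw [← integral_sub (f := fun x => (h x t - h x t₀) * (h x t + h x t₀))
        (g := fun x => (h x t - h x t₀) * (hxx x t + hxx x t₀))
        ((((ch t htt).sub (ch t₀ ht₀)).mul ((ch t htt).add (ch t₀ ht₀))).intervalIntegrable _ _)
        ((((ch t htt).sub (ch t₀ ht₀)).mul ((chxx t htt).add (chxx t₀ ht₀))).intervalIntegrable _ _)]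
      exact integral_congr fun x _ => by ring
    have B0 : (∫ x in (-a)..a, ((h x t)^2 + (hx x t)^2))
        - (∫ x in (-a)..a, ((h x t₀)^2 + (hx x t₀)^2))
        = ∫ x in (-a)..a, (((h x t)^2 + (hx x t)^2) - ((h x t₀)^2 + (hx x t₀)^2)) := by
      rw [← integral_sub (f := fun x => (h x t)^2 + (hx x t)^2)
        (g := fun x => (h x t₀)^2 + (hx x t₀)^2)
        ((((ch t htt).pow 2).add ((chx t htt).pow 2)).intervalIntegrable _ _)
        ((((ch t₀ ht₀).pow 2).add ((chx t₀ ht₀).pow 2)).intervalIntegrable _ _)]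
    rw [hbdry] at ibp
    -- combine
    have : (∫ x in (-a)..a, (hx x t - hx x t₀) * (hx x t + hx x t₀))
        = - ∫ x in (-a)..a, (h x t - h x t₀) * (hxx x t + hxx x t₀) := by
      have := ibp
      linarith
    linarith [B0, B1, B2, this]
  -- the limit candidate
  -- bounds
  obtain ⟨C1, hC1⟩ := ((isCompact_Icc (a := -a) (b := a)).prod (isCompact_Icc (a := (0:ℝ)) (b := T))).exists_bound_of_continuousOn
    (hsol.cont_ht.mono (Set.prod_mono (Set.subset_univ _) subset_rfl))
  obtain ⟨C2, hC2⟩ := ((isCompact_Icc (a := -a) (b := a)).prod (isCompact_Icc (a := (0:ℝ)) (b := T))).exists_bound_of_continuousOn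
    (hsol.cont_h.mono (Set.prod_mono (Set.subset_univ _) subset_rfl))
  obtain ⟨C3, hC3⟩ := ((isCompact_Icc (a := -a) (b := a)).prod (isCompact_Icc (a := (0:ℝ)) (b := T))).exists_bound_of_continuousOn
    (hsol.cont_hxx.mono (Set.prod_mono (Set.subset_univ _) subset_rfl))
  have hmem00 : ((0:ℝ), (0:ℝ)) ∈ Set.Icc (-a) a ×ˢ Set.Icc (0:ℝ) T := by
    simp only [Set.mem_prod, Set.mem_Icc]
    exact ⟨⟨by linarith, by linarith⟩, ⟨le_refl 0, le_of_lt hT⟩⟩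
  have hC1nn : 0 ≤ C1 := le_trans (norm_nonneg _) (hC1 _ hmem00)
  have hC2nn : 0 ≤ C2 := le_trans (norm_nonneg _) (hC2 _ hmem00)
  have hC3nn : 0 ≤ C3 := le_trans (norm_nonneg _) (hC3 _ hmem00)
  have hmvt : ∀ x ∈ Set.Icc (-a) a, ∀ t' ∈ Set.Icc (0:ℝ) T,
      ‖h x t' - h x t₀‖ ≤ C1 * ‖t' - t₀‖ := by
    intro x hxm t' ht'
    exact Convex.norm_image_sub_le_of_norm_hasDerivWithin_le
      (fun s hs => hsol.deriv_ht x s hs)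
      (fun s hs => hC1 (x, s) ⟨hxm, hs⟩) (convex_Icc 0 T) ht₀ ht'
  set l : Filter ℝ := 𝓝[Set.Icc (0:ℝ) T \ {t₀}] t₀ with hl
  set F : ℝ → ℝ → ℝ := fun t' x => (2⁻¹ * (t' - t₀)⁻¹) *
      ((h x t' - h x t₀) * (h x t' + h x t₀ - hxx x t' - hxx x t₀)) with hF
  have hself : ∀ᶠ t' in l, t' ∈ Set.Icc (0:ℝ) T \ {t₀} := self_mem_nhdsWithin
  have hF_meas : ∀ᶠ t' in l, AEStronglyMeasurable (F t') (volume.restrict (Set.uIoc (-a) a)) := by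
    filter_upwards [hself] with t' ht'
    exact (Continuous.aestronglyMeasurable (by
      exact continuous_const.mul ((((ch t' ht'.1).sub (ch t₀ ht₀)).mul
        ((((ch t' ht'.1).add (ch t₀ ht₀)).sub (chxx t' ht'.1)).sub (chxx t₀ ht₀))))))
  have h_bound : ∀ᶠ t' in l, ∀ᵐ x ∂volume, x ∈ Set.uIoc (-a) a →
      ‖F t' x‖ ≤ 2⁻¹ * (C1 * (2*C2 + 2*C3)) := by
    filter_upwards [hself] with t' ht'
    refine ae_of_all _ fun x hxI => ?_
    have hxm : x ∈ Set.Icc (-a) a := by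
      have hIoc : Set.uIoc (-a) a = Set.Ioc (-a) a := Set.uIoc_of_le hnaa
      exact Set.Ioc_subset_Icc_self (hIoc ▸ hxI)
    have hne : t' - t₀ ≠ 0 := sub_ne_zero.2 fun hh => ht'.2 (by simp [hh])
    have hb1 : |h x t' - h x t₀| ≤ C1 * |t' - t₀| := by
      have := hmvt x hxm t' ht'.1
      simpa [Real.norm_eq_abs] using this
    have hb2 : |h x t' + h x t₀ - hxx x t' - hxx x t₀| ≤ 2*C2 + 2*C3 := by
      have e1 : |h x t'| ≤ C2 := by
        have := hC2 (x, t') ⟨hxm, ht'.1⟩; simpa [Real.norm_eq_abs] using this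
      have e2 : |h x t₀| ≤ C2 := by
        have := hC2 (x, t₀) ⟨hxm, ht₀⟩; simpa [Real.norm_eq_abs] using this
      have e3 : |hxx x t'| ≤ C3 := by
        have := hC3 (x, t') ⟨hxm, ht'.1⟩; simpa [Real.norm_eq_abs] using this
      have e4 : |hxx x t₀| ≤ C3 := by
        have := hC3 (x, t₀) ⟨hxm, ht₀⟩; simpa [Real.norm_eq_abs] using this
      have := abs_sub (h x t' + h x t₀ - hxx x t') (hxx x t₀)
      have h2 := abs_sub (h x t' + h x t₀) (hxx x t')
      have h3 := abs_add_le (h x t') (h x t₀)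
      linarith
    have habs : ‖F t' x‖ = 2⁻¹ * |t' - t₀|⁻¹ *
        (|h x t' - h x t₀| * |h x t' + h x t₀ - hxx x t' - hxx x t₀|) := by
      rw [hF]
      simp only [Real.norm_eq_abs, abs_mul, abs_inv, abs_two]
    rw [habs]
    have hpos : (0:ℝ) < |t' - t₀| := abs_pos.2 hne
    have step : |h x t' - h x t₀| * |h x t' + h x t₀ - hxx x t' - hxx x t₀|
        ≤ (C1 * |t' - t₀|) * (2*C2 + 2*C3) :=
      mul_le_mul hb1 hb2 (abs_nonneg _) (by positivity)
    have : 2⁻¹ * |t' - t₀|⁻¹ * (|h x t' - h x t₀| * |h x t' + h x t₀ - hxx x t' - hxx x t₀|)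
        ≤ 2⁻¹ * |t' - t₀|⁻¹ * ((C1 * |t' - t₀|) * (2*C2 + 2*C3)) := by
      apply mul_le_mul_of_nonneg_left step (by positivity)
    calc 2⁻¹ * |t' - t₀|⁻¹ * (|h x t' - h x t₀| * |h x t' + h x t₀ - hxx x t' - hxx x t₀|)
        ≤ 2⁻¹ * |t' - t₀|⁻¹ * ((C1 * |t' - t₀|) * (2*C2 + 2*C3)) := this
      _ = 2⁻¹ * (C1 * (2*C2 + 2*C3)) * (|t' - t₀|⁻¹ * |t' - t₀|) := by ring
      _ = 2⁻¹ * (C1 * (2*C2 + 2*C3)) := by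
          rw [inv_mul_cancel₀ (ne_of_gt hpos), mul_one]
  have h_lim : ∀ᵐ x ∂volume, x ∈ Set.uIoc (-a) a →
      Tendsto (fun t' => F t' x) l (𝓝 (ht x t₀ * (h x t₀ - hxx x t₀))) := by
    refine ae_of_all _ fun x _ => ?_
    have hsl : Tendsto (slope (fun s => h x s) t₀) l (𝓝 (ht x t₀)) :=
      hasDerivWithinAt_iff_tendsto_slope.1 (hsol.deriv_ht x t₀ ht₀)
    have hmapsto : Tendsto (fun t' : ℝ => ((x, t') : ℝ × ℝ)) (𝓝[Set.Icc (0:ℝ) T] t₀)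
        (𝓝[Set.univ ×ˢ Set.Icc (0:ℝ) T] (x, t₀)) := by
      apply tendsto_nhdsWithin_of_tendsto_nhds_of_eventually_within
      · exact ((continuous_const.prodMk continuous_id).tendsto t₀).mono_left nhdsWithin_le_nhds
      · filter_upwards [self_mem_nhdsWithin] with s hs
        exact ⟨trivial, hs⟩
    have c1 : Tendsto (fun t' => h x t') l (𝓝 (h x t₀)) :=
      ((hsol.cont_h (x, t₀) ⟨trivial, ht₀⟩).tendsto.comp hmapsto).mono_left
        (nhdsWithin_mono _ Set.diff_subset)
    have c2 : Tendsto (fun t' => hxx x t') l (𝓝 (hxx x t₀)) :=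
      ((hsol.cont_hxx (x, t₀) ⟨trivial, ht₀⟩).tendsto.comp hmapsto).mono_left
        (nhdsWithin_mono _ Set.diff_subset)
    have hΨ : Tendsto (fun t' => h x t' + h x t₀ - hxx x t' - hxx x t₀) l
        (𝓝 (h x t₀ + h x t₀ - hxx x t₀ - hxx x t₀)) :=
      ((c1.add tendsto_const_nhds).sub c2).sub tendsto_const_nhds
    have heq : ∀ t', F t' x = 2⁻¹ * (slope (fun s => h x s) t₀ t' *
        (h x t' + h x t₀ - hxx x t' - hxx x t₀)) := by
      intro t'
      rw [hF, slope_def_field]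
      ring
    have hlim0 : Tendsto (fun t' => 2⁻¹ * (slope (fun s => h x s) t₀ t' *
        (h x t' + h x t₀ - hxx x t' - hxx x t₀))) l
        (𝓝 (2⁻¹ * (ht x t₀ * (h x t₀ + h x t₀ - hxx x t₀ - hxx x t₀)))) :=
      (hsl.mul hΨ).const_mul 2⁻¹
    have : ht x t₀ * (h x t₀ - hxx x t₀)
        = 2⁻¹ * (ht x t₀ * (h x t₀ + h x t₀ - hxx x t₀ - hxx x t₀)) := by ring
    rw [this]
    exact hlim0.congr fun t' => (heq t').symm
  have hDCT := intervalIntegral.tendsto_integral_filter_of_dominated_convergence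
    (μ := volume) (a := -a) (b := a) (F := F)
    (f := fun x => ht x t₀ * (h x t₀ - hxx x t₀))
    (fun _ => 2⁻¹ * (C1 * (2*C2 + 2*C3))) hF_meas h_bound
    (intervalIntegrable_const) h_lim
  -- slope equality
  have hslope : (fun t' => ∫ x in (-a)..a, F t' x) =ᶠ[l]
      slope (fun s => (1/2) * ∫ x in (-a)..a, ((h x s)^2 + (hx x s)^2)) t₀ := by
    filter_upwards [hself] with t' ht'
    have hne : t' - t₀ ≠ 0 := sub_ne_zero.2 fun hh => ht'.2 (by simp [hh])
    have hconst : (∫ x in (-a)..a, F t' x) = (2⁻¹ * (t' - t₀)⁻¹) *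
        ∫ x in (-a)..a, (h x t' - h x t₀) * (h x t' + h x t₀ - hxx x t' - hxx x t₀) := by
      rw [hF]; exact integral_const_mul _ _
    rw [hconst, slope_def_field]
    have := hEdiff t' ht'.1
    rw [this]
    rw [div_eq_mul_inv]
    ring
  have key : HasDerivWithinAt
      (fun s => (1/2) * ∫ x in (-a)..a, ((h x s)^2 + (hx x s)^2))
      (∫ x in (-a)..a, ht x t₀ * (h x t₀ - hxx x t₀)) (Set.Icc 0 T) t₀ := by
    rw [hasDerivWithinAt_iff_tendsto_slope]
    exact hDCT.congr' hslope
  ---------------------------------------------------------------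
  -- STEP B : identify the limit with the claimed expression
  ---------------------------------------------------------------
  have Ch := ch t₀ ht₀
  have Chx := chx t₀ ht₀
  have Chxx := chxx t₀ ht₀
  have Chxxx := chxxx t₀ ht₀
  have Cht := cht t₀ ht₀
  have Cabs : Continuous fun x => |h x t₀| ^ 3 + ε := ((Ch.abs).pow 3).add continuous_const
  -- (i) ∫ h² hx = 0
  have izero : (∫ x in (-a)..a, (h x t₀)^2 * hx x t₀) = 0 := by
    have d3 : ∀ x ∈ uIcc (-a) a, HasDerivAt (fun y => (h y t₀)^3 / 3)
        ((h x t₀)^2 * hx x t₀) x := by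
      intro x _
      have := ((hsol.deriv_hx x t₀ ht₀).fun_pow 3).div_const 3
      refine this.congr_deriv ?_
      push_cast
      ring
    rw [integral_eq_sub_of_hasDerivAt d3 (((Ch.pow 2).mul Chx).intervalIntegrable _ _)]
    rw [eh t₀]; ring
  -- (ii) ∫ (h hx) hxx = -(1/2) ∫ h² hxxx
  have i2 : (∫ x in (-a)..a, h x t₀ * hx x t₀ * hxx x t₀)
      = -(1/2) * ∫ x in (-a)..a, (h x t₀)^2 * hxxx x t₀ := by
    have hu : ∀ x ∈ uIcc (-a) a, HasDerivAt (fun y => hxx y t₀) (hxxx x t₀) x :=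
      fun x _ => hsol.deriv_hxxx x t₀ ht₀
    have hv : ∀ x ∈ uIcc (-a) a, HasDerivAt (fun y => (h y t₀)^2 / 2)
        (h x t₀ * hx x t₀) x := by
      intro x _
      have := ((hsol.deriv_hx x t₀ ht₀).fun_pow 2).div_const 2
      refine this.congr_deriv ?_
      push_cast
      ring
    have ibp := integral_mul_deriv_eq_deriv_mul hu hv
      (Chxxx.intervalIntegrable _ _) ((Ch.mul Chx).intervalIntegrable _ _)
    have e1 : (∫ x in (-a)..a, h x t₀ * hx x t₀ * hxx x t₀)
        = ∫ x in (-a)..a, hxx x t₀ * (h x t₀ * hx x t₀) :=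
      integral_congr fun x _ => by ring
    have e2 : (∫ x in (-a)..a, hxxx x t₀ * ((h x t₀)^2 / 2))
        = (1/2) * ∫ x in (-a)..a, (h x t₀)^2 * hxxx x t₀ := by
      rw [← intervalIntegral.integral_const_mul]
      exact integral_congr fun x _ => by ring
    rw [e1, ibp, eh t₀, ehxx t₀ ht₀, e2]
    ring
  -- (iii) IBP against the flux
  have hu2 : ∀ x ∈ uIcc (-a) a, HasDerivAt (fun y => h y t₀ - hxx y t₀)
      (hx x t₀ - hxxx x t₀) x := fun x _ =>
    (hsol.deriv_hx x t₀ ht₀).sub (hsol.deriv_hxxx x t₀ ht₀)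
  have hv2 : ∀ x ∈ uIcc (-a) a, HasDerivAt
      (fun y => S * ((|h y t₀| ^ 3 + ε) * (hx y t₀ + hxxx y t₀)))
      (-(ht x t₀) - h x t₀ * hx x t₀) x := fun x _ => hsol.pde x t₀ ht₀
  have ibp2 := integral_mul_deriv_eq_deriv_mul hu2 hv2
    ((Chx.sub Chxxx).intervalIntegrable _ _)
    (((Cht.neg).sub (Ch.mul Chx)).intervalIntegrable _ _)
  -- boundary of ibp2 vanishes
  have hbdry2 : (h a t₀ - hxx a t₀) * (S * ((|h a t₀| ^ 3 + ε) * (hx a t₀ + hxxx a t₀)))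
      - (h (-a) t₀ - hxx (-a) t₀) *
        (S * ((|h (-a) t₀| ^ 3 + ε) * (hx (-a) t₀ + hxxx (-a) t₀))) = 0 := by
    rw [eh t₀, ehx t₀ ht₀, ehxx t₀ ht₀, ehxxx t₀ ht₀]
    ring
  rw [hbdry2, zero_sub] at ibp2
  -- ibp2 : ∫ (h - hxx) * (-(ht) - h hx) = - ∫ (hx - hxxx) * flux
  -- (iv) expand ∫ (hx - hxxx) * flux
  have e4 : (∫ x in (-a)..a, (hx x t₀ - hxxx x t₀) *
        (S * ((|h x t₀| ^ 3 + ε) * (hx x t₀ + hxxx x t₀))))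
      = (∫ x in (-a)..a, S * ((|h x t₀| ^ 3 + ε) * (hx x t₀)^2))
        - ∫ x in (-a)..a, S * ((|h x t₀| ^ 3 + ε) * (hxxx x t₀)^2) := by
    rw [← integral_sub (f := fun x => S * ((|h x t₀| ^ 3 + ε) * (hx x t₀)^2))
      (g := fun x => S * ((|h x t₀| ^ 3 + ε) * (hxxx x t₀)^2))
      ((continuous_const.mul (Cabs.mul (Chx.pow 2))).intervalIntegrable _ _)
      ((continuous_const.mul (Cabs.mul (Chxxx.pow 2))).intervalIntegrable _ _)]
    exact integral_congr fun x _ => by ring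
  have e5 : (∫ x in (-a)..a, S * ((|h x t₀| ^ 3 + ε) * (hx x t₀)^2))
      = S * ∫ x in (-a)..a, (|h x t₀| ^ 3 + ε) * (hx x t₀)^2 := integral_const_mul _ _
  have e6 : (∫ x in (-a)..a, S * ((|h x t₀| ^ 3 + ε) * (hxxx x t₀)^2))
      = S * ∫ x in (-a)..a, (|h x t₀| ^ 3 + ε) * (hxxx x t₀)^2 := integral_const_mul _ _
  -- (v) expand LHS of ibp2 pointwise
  have e7 : (∫ x in (-a)..a, (h x t₀ - hxx x t₀) * (-(ht x t₀) - h x t₀ * hx x t₀))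
      = ((- ∫ x in (-a)..a, ht x t₀ * (h x t₀ - hxx x t₀))
          - ∫ x in (-a)..a, (h x t₀)^2 * hx x t₀)
        + ∫ x in (-a)..a, h x t₀ * hx x t₀ * hxx x t₀ := by
    rw [← intervalIntegral.integral_neg, ← integral_sub
      (f := fun x => -(ht x t₀ * (h x t₀ - hxx x t₀))) (g := fun x => (h x t₀)^2 * hx x t₀)
      ((Cht.mul (Ch.sub Chxx)).neg.intervalIntegrable _ _)
      (((Ch.pow 2).mul Chx).intervalIntegrable _ _),
      ← integral_add
      (f := fun x => -(ht x t₀ * (h x t₀ - hxx x t₀)) - (h x t₀)^2 * hx x t₀)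
      (g := fun x => h x t₀ * hx x t₀ * hxx x t₀)
      (((Cht.mul (Ch.sub Chxx)).neg.sub ((Ch.pow 2).mul Chx)).intervalIntegrable _ _)
      ((Ch.mul Chx |>.mul Chxx).intervalIntegrable _ _)]
    exact integral_congr fun x _ => by ring
  -- assemble
  have hL : (∫ x in (-a)..a, ht x t₀ * (h x t₀ - hxx x t₀))
      = -(S * ∫ x in (-a)..a, (|h x t₀| ^ 3 + ε) * (hxxx x t₀)^2)
        - (1/2) * (∫ x in (-a)..a, (h x t₀)^2 * hxxx x t₀)
        + S * ∫ x in (-a)..a, (|h x t₀| ^ 3 + ε) * (hx x t₀)^2 := by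
    rw [e7] at ibp2
    rw [e4, e5, e6] at ibp2
    linarith [izero, i2, ibp2]
  rw [hL] at key
  exact key
end

section
/- There exists a constant C > 0 depending only on S and a such that the following holds for every ε ∈ (0,1]: if h is a classical periodic solution of the regularized Model I equation on [0,T] and V(t) := max( 1, ∫_{−a}^{a} ( h(x,t)² + h_x(x,t)² ) dx ), then V(t) ≤ ( V(0)^{−3/2} − (3/2)·C·t )^{−2/3} for all 0 ≤ t < min( T, (2/(3C))·V(0)^{−3/2} ); in particular, ∫_{−a}^{a} ( h(x,t)² + h_x(x,t)² ) dx ≤ 2^{2/3}·max( 1, ∫_{−a}^{a} ( h(x,0)² + h_x(x,0)² ) dx ) for all 0 ≤ t ≤ min( T, (1/(3C))·V(0)^{−3/2} ). -/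
open Set MeasureTheory intervalIntegral Filter Topology

section helpers
variable {T : ℝ}

lemma cont_slice_x {f : ℝ → ℝ → ℝ}
    (cf : ContinuousOn (fun p : ℝ × ℝ => f p.1 p.2) (univ ×ˢ Icc 0 T))
    {t : ℝ} (htt : t ∈ Icc (0:ℝ) T) : Continuous fun x => f x t := by
  rw [← continuousOn_univ]
  exact cf.comp ((continuous_id.prodMk continuous_const).continuousOn)
    (fun x _ => ⟨trivial, htt⟩)

lemma cont_slice_t {f : ℝ → ℝ → ℝ}
    (cf : ContinuousOn (fun p : ℝ × ℝ => f p.1 p.2) (univ ×ˢ Icc 0 T))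
    (x : ℝ) : ContinuousOn (fun s => f x s) (Icc (0:ℝ) T) :=
  cf.comp ((continuous_const.prodMk continuous_id).continuousOn)
    (fun s hs => ⟨trivial, hs⟩)

lemma bound_slab {f : ℝ → ℝ → ℝ} (a : ℝ)
    (cf : ContinuousOn (fun p : ℝ × ℝ => f p.1 p.2) (univ ×ˢ Icc 0 T)) :
    ∃ M : ℝ, 0 ≤ M ∧ ∀ x ∈ Icc (-a) a, ∀ s ∈ Icc (0:ℝ) T, |f x s| ≤ M := by
  obtain ⟨M, hM⟩ := (IsCompact.exists_bound_of_continuousOn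
    ((isCompact_Icc (a := -a) (b := a)).prod (isCompact_Icc (a := (0:ℝ)) (b := T)))
    (cf.mono (by intro p hp; exact ⟨trivial, hp.2⟩)))
  exact ⟨max M 0, le_max_right _ _, fun x hxm s hs =>
    le_trans (hM (x, s) ⟨hxm, hs⟩) (le_max_left _ _)⟩

end helpers


noncomputable def C0 (a S : ℝ) : ℝ :=
  2*S*((Real.sqrt (1+1/(2*a)))^3 + 1) + a*(Real.sqrt (1+1/(2*a)))/(4*S)

lemma C0_pos {a S : ℝ} (ha : 0 < a) (hS : 0 < S) : 0 < C0 a S := by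
  unfold C0
  have h1 : 0 ≤ Real.sqrt (1+1/(2*a)) := Real.sqrt_nonneg _
  positivity

namespace ModelIAux
variable {a S ε T : ℝ} {h hx hxx hxxx hxxxx ht : ℝ → ℝ → ℝ}

lemma periodic_deriv {f g : ℝ → ℝ} (hper : ∀ x, f (x + 2*a) = f x)
    (hd : ∀ x, HasDerivAt f (g x) x) : ∀ x, g (x + 2*a) = g x := by
  intro x
  have h1 : HasDerivAt (fun y => f (y + 2*a)) (g (x + 2*a)) x := by
    have := (hd (x + 2*a)).comp x ((hasDerivAt_id x).add_const (2*a))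
    rw [mul_one] at this; exact this
  have h2 : HasDerivAt (fun y => f (y + 2*a)) (g x) x := by
    have he : (fun y => f (y + 2*a)) = f := funext fun y => hper y
    rw [he]; exact hd x
  exact h1.unique h2

variable (sol : ClassicalSolutionI a S ε T h hx hxx hxxx hxxxx ht)
include sol

lemma per_hx {t : ℝ} (htt : t ∈ Icc (0:ℝ) T) : ∀ x, hx (x + 2*a) t = hx x t :=
  periodic_deriv (fun x => sol.periodic_x x t) (fun x => sol.deriv_hx x t htt)

lemma per_hxx {t : ℝ} (htt : t ∈ Icc (0:ℝ) T) : ∀ x, hxx (x + 2*a) t = hxx x t :=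
  periodic_deriv (per_hx sol htt) (fun x => sol.deriv_hxx x t htt)

lemma per_hxxx {t : ℝ} (htt : t ∈ Icc (0:ℝ) T) : ∀ x, hxxx (x + 2*a) t = hxxx x t :=
  periodic_deriv (per_hxx sol htt) (fun x => sol.deriv_hxxx x t htt)

lemma hasDeriv_energy (ha : 0 < a) {t : ℝ} (htt : t ∈ Icc (0:ℝ) T) :
    HasDerivWithinAt (fun s => ∫ x in (-a)..a, ((h x s)^2 + (hx x s)^2))
      (∫ x in (-a)..a, 2 * ht x t * (h x t - hxx x t)) (Icc 0 T) t := by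
  have haa : -a ≤ a := by linarith
  have chs : ∀ s ∈ Icc (0:ℝ) T, Continuous fun x => h x s :=
    fun s hs => cont_slice_x sol.cont_h hs
  have chxs : ∀ s ∈ Icc (0:ℝ) T, Continuous fun x => hx x s :=
    fun s hs => cont_slice_x sol.cont_hx hs
  have chxxs : ∀ s ∈ Icc (0:ℝ) T, Continuous fun x => hxx x s :=
    fun s hs => cont_slice_x sol.cont_hxx hs
  have int1 : ∀ s ∈ Icc (0:ℝ) T,
      IntervalIntegrable (fun x => (h x s)^2 + (hx x s)^2) volume (-a) a :=
    fun s hs => (((chs s hs).pow 2).add ((chxs s hs).pow 2)).intervalIntegrable _ _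
  -- Step A
  have keyA : ∀ s ∈ Icc (0:ℝ) T,
      (∫ x in (-a)..a, ((h x s)^2 + (hx x s)^2)) - (∫ x in (-a)..a, ((h x t)^2 + (hx x t)^2))
      = ∫ x in (-a)..a, (h x s - h x t) * ((h x s + h x t) - (hxx x s + hxx x t)) := by
    intro s hs
    have c1 : Continuous fun x => (h x s - h x t) * ((h x s + h x t) - (hxx x s + hxx x t)) := by
      apply Continuous.mul
      · exact (chs s hs).sub (chs t htt)
      · exact ((chs s hs).add (chs t htt)).sub ((chxxs s hs).add (chxxs t htt))
    have c2 : Continuous fun x =>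
        (hx x s - hx x t) * (hx x s + hx x t) + (h x s - h x t) * (hxx x s + hxx x t) := by
      apply Continuous.add
      · exact ((chxs s hs).sub (chxs t htt)).mul ((chxs s hs).add (chxs t htt))
      · exact ((chs s hs).sub (chs t htt)).mul ((chxxs s hs).add (chxxs t htt))
    have ftc : (∫ x in (-a)..a,
        ((hx x s - hx x t) * (hx x s + hx x t) + (h x s - h x t) * (hxx x s + hxx x t))) = 0 := by
      have hd : ∀ x ∈ uIcc (-a) a, HasDerivAt (fun y => (h y s - h y t) * (hx y s + hx y t))
          ((hx x s - hx x t) * (hx x s + hx x t) + (h x s - h x t) * (hxx x s + hxx x t)) x := by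
        intro x _
        exact ((sol.deriv_hx x s hs).sub (sol.deriv_hx x t htt)).mul
          ((sol.deriv_hxx x s hs).add (sol.deriv_hxx x t htt))
      rw [integral_eq_sub_of_hasDerivAt hd (c2.intervalIntegrable _ _)]
      have ea : (a:ℝ) = -a + 2*a := by ring
      rw [ea, sol.periodic_x, sol.periodic_x, per_hx sol hs, per_hx sol htt]
      ring
    rw [← integral_sub (int1 s hs) (int1 t htt)]
    have e1 : (fun x => ((h x s)^2 + (hx x s)^2) - ((h x t)^2 + (hx x t)^2))
        = fun x => ((h x s - h x t) * ((h x s + h x t) - (hxx x s + hxx x t))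
          + ((hx x s - hx x t) * (hx x s + hx x t) + (h x s - h x t) * (hxx x s + hxx x t))) := by
      funext x; ring
    rw [e1, integral_add (c1.intervalIntegrable _ _) (c2.intervalIntegrable _ _), ftc, add_zero]
  -- slope convergence
  rw [hasDerivWithinAt_iff_tendsto_slope]
  obtain ⟨M1, hM1n, hM1⟩ := bound_slab a sol.cont_ht
  obtain ⟨M2, hM2n, hM2⟩ := bound_slab a sol.cont_h
  obtain ⟨M3, hM3n, hM3⟩ := bound_slab a sol.cont_hxx
  set l := nhdsWithin t (Icc (0:ℝ) T \ {t}) with hl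
  set F : ℝ → ℝ → ℝ := fun s x =>
    ((s - t)⁻¹ * (h x s - h x t)) * ((h x s + h x t) - (hxx x s + hxx x t)) with hF
  have main : Tendsto (fun s => ∫ x in (-a)..a, F s x) l
      (𝓝 (∫ x in (-a)..a, 2 * ht x t * (h x t - hxx x t))) := by
    apply intervalIntegral.tendsto_integral_filter_of_dominated_convergence
      (bound := fun _ => M1 * (2*M2 + 2*M3))
    · filter_upwards [self_mem_nhdsWithin] with s hs
      have : Continuous (F s) := by
        apply Continuous.mul
        · exact continuous_const.mul ((chs s hs.1).sub (chs t htt))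
        · exact ((chs s hs.1).add (chs t htt)).sub ((chxxs s hs.1).add (chxxs t htt))
      exact this.aestronglyMeasurable
    · filter_upwards [self_mem_nhdsWithin] with s hs
      apply ae_of_all
      intro x hxI
      rw [uIoc_of_le haa] at hxI
      have hxm : x ∈ Icc (-a) a := ⟨hxI.1.le, hxI.2⟩
      have hst : s - t ≠ 0 := sub_ne_zero.mpr (by simpa using hs.2)
      have mvt : |h x s - h x t| ≤ M1 * |s - t| := by
        have := Convex.norm_image_sub_le_of_norm_hasDerivWithin_le
          (f := fun σ => h x σ) (f' := fun σ => ht x σ) (s := Icc (0:ℝ) T)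
          (fun σ hσ => sol.deriv_ht x σ hσ) (fun σ hσ => hM1 x hxm σ hσ)
          (convex_Icc 0 T) htt hs.1
        simpa [Real.norm_eq_abs] using this
      have hfac : |(h x s + h x t) - (hxx x s + hxx x t)| ≤ 2*M2 + 2*M3 := by
        have b1 := hM2 x hxm s hs.1
        have b2 := hM2 x hxm t htt
        have b3 := hM3 x hxm s hs.1
        have b4 := hM3 x hxm t htt
        calc |(h x s + h x t) - (hxx x s + hxx x t)|
            ≤ |h x s| + |h x t| + (|hxx x s| + |hxx x t|) := by
              apply (abs_sub _ _).trans; gcongr <;> exact abs_add_le _ _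
          _ ≤ 2*M2 + 2*M3 := by linarith
      have : ‖F s x‖ = |s - t|⁻¹ * |h x s - h x t| * |(h x s + h x t) - (hxx x s + hxx x t)| := by
        rw [Real.norm_eq_abs, hF]
        rw [abs_mul, abs_mul, abs_inv]
      rw [this]
      calc |s - t|⁻¹ * |h x s - h x t| * |(h x s + h x t) - (hxx x s + hxx x t)|
          ≤ |s - t|⁻¹ * (M1 * |s - t|) * (2*M2 + 2*M3) := by
            gcongr
        _ = M1 * (2*M2 + 2*M3) := by
            field_simp
    · exact intervalIntegrable_const
    · apply ae_of_all
      intro x _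
      have t1 : Tendsto (fun s => (s - t)⁻¹ * (h x s - h x t)) l (𝓝 (ht x t)) := by
        have := (sol.deriv_ht x t htt)
        rw [hasDerivWithinAt_iff_tendsto_slope] at this
        refine this.congr (fun s => ?_)
        rw [slope_def_field, div_eq_inv_mul]
      have t2 : Tendsto (fun s => (h x s + h x t) - (hxx x s + hxx x t)) l
          (𝓝 ((h x t + h x t) - (hxx x t + hxx x t))) := by
        have c1 : ContinuousWithinAt (fun s => h x s) (Icc (0:ℝ) T) t :=
          (cont_slice_t sol.cont_h x) t htt
        have c2 : ContinuousWithinAt (fun s => hxx x s) (Icc (0:ℝ) T) t :=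
          (cont_slice_t sol.cont_hxx x) t htt
        have hle : l ≤ nhdsWithin t (Icc (0:ℝ) T) := nhdsWithin_mono t diff_subset
        exact ((c1.tendsto.mono_left hle).add tendsto_const_nhds).sub
          ((c2.tendsto.mono_left hle).add tendsto_const_nhds)
      have := t1.mul t2
      convert this using 2
      ring
  refine main.congr' ?_
  filter_upwards [self_mem_nhdsWithin] with s hs
  rw [slope_def_field, keyA s hs.1, div_eq_inv_mul, ← intervalIntegral.integral_const_mul]
  congr 1
  funext x
  rw [hF]
  ring


lemma cont_ht_x {t : ℝ} (htt : t ∈ Icc (0:ℝ) T) : Continuous fun x => ht x t :=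
  cont_slice_x sol.cont_ht htt

lemma deriv_value_eq (ha : 0 < a) (hS : 0 < S) {t : ℝ} (htt : t ∈ Icc (0:ℝ) T) :
    (∫ x in (-a)..a, 2 * ht x t * (h x t - hxx x t))
      = ∫ x in (-a)..a, (-((h x t)^2 * hxxx x t)
          + 2*S*((|h x t|^3 + ε) * ((hx x t)^2 - (hxxx x t)^2))) := by
  have haa : -a ≤ a := by linarith
  have ch : Continuous fun x => h x t := cont_slice_x sol.cont_h htt
  have chx : Continuous fun x => hx x t := cont_slice_x sol.cont_hx htt
  have chxx : Continuous fun x => hxx x t := cont_slice_x sol.cont_hxx htt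
  have chxxx : Continuous fun x => hxxx x t := cont_slice_x sol.cont_hxxx htt
  have cht : Continuous fun x => ht x t := cont_slice_x sol.cont_ht htt
  have c1 : Continuous fun x => 2 * ht x t * (h x t - hxx x t) :=
    (continuous_const.mul cht).mul (ch.sub chxx)
  have c2 : Continuous fun x => (-((h x t)^2 * hxxx x t)
      + 2*S*((|h x t|^3 + ε) * ((hx x t)^2 - (hxxx x t)^2))) := by
    apply Continuous.add
    · exact ((ch.pow 2).mul chxxx).neg
    · exact continuous_const.mul ((((ch.abs.pow 3)).add continuous_const).mul
        ((chx.pow 2).sub (chxxx.pow 2)))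
  have hd : ∀ x ∈ uIcc (-a) a, HasDerivAt
      (fun y => -(2/3)*(h y t)^3 + (h y t)^2 * hxx y t
        - 2*(S * ((|h y t| ^ 3 + ε) * (hx y t + hxxx y t)) * (h y t - hxx y t)))
      (2 * ht x t * (h x t - hxx x t) - (-((h x t)^2 * hxxx x t)
          + 2*S*((|h x t|^3 + ε) * ((hx x t)^2 - (hxxx x t)^2)))) x := by
    intro x _
    have dh := sol.deriv_hx x t htt
    have dhx := sol.deriv_hxx x t htt
    have dhxx := sol.deriv_hxxx x t htt
    have dF := sol.pde x t htt
    have d1 : HasDerivAt (fun y => -(2/3)*(h y t)^3)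
        (-(2/3)*(3*(h x t)^2 * hx x t)) x := by
      have := (dh.fun_pow 3).const_mul (-(2/3) : ℝ)
      refine this.congr_deriv ?_
      all_goals push_cast; ring
    have d2 : HasDerivAt (fun y => (h y t)^2 * hxx y t)
        ((2*(h x t)*hx x t) * hxx x t + (h x t)^2 * hxxx x t) x := by
      have := (dh.fun_pow 2).fun_mul dhxx
      refine this.congr_deriv ?_
      all_goals push_cast; ring
    have d3 : HasDerivAt (fun y => 2*(S * ((|h y t| ^ 3 + ε) * (hx y t + hxxx y t)) * (h y t - hxx y t)))
        (2*((-(ht x t) - h x t * hx x t) * (h x t - hxx x t)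
          + (S * ((|h x t| ^ 3 + ε) * (hx x t + hxxx x t))) * (hx x t - hxxx x t))) x :=
      (dF.mul (dh.sub dhxx)).const_mul (2:ℝ)
    have := (d1.fun_add d2).fun_sub d3
    refine this.congr_deriv ?_
    ring
  have := integral_eq_sub_of_hasDerivAt hd ((c1.sub c2).intervalIntegrable _ _)
  have hval : (∫ x in (-a)..a, (2 * ht x t * (h x t - hxx x t) - (-((h x t)^2 * hxxx x t)
      + 2*S*((|h x t|^3 + ε) * ((hx x t)^2 - (hxxx x t)^2))))) = 0 := by
    rw [this]
    have ea : (a:ℝ) = -a + 2*a := by ring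
    rw [ea, sol.periodic_x, per_hx sol htt, per_hxx sol htt, per_hxxx sol htt]
    ring
  rw [integral_sub (c1.intervalIntegrable _ _) (c2.intervalIntegrable _ _)] at hval
  linarith


omit sol in
lemma integral_trap (ha : 0 < a) {f : ℝ → ℝ} (cf : Continuous f) (hf : ∀ y, 0 ≤ f y)
    {c d : ℝ} (hc : c ∈ Icc (-a) a) (hd : d ∈ Icc (-a) a) (hcd : c ≤ d) :
    (∫ y in c..d, f y) ≤ ∫ y in (-a)..a, f y := by
  have e1 : (∫ y in (-a)..c, f y) + (∫ y in c..d, f y) = ∫ y in (-a)..d, f y :=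
    integral_add_adjacent_intervals (cf.intervalIntegrable _ _) (cf.intervalIntegrable _ _)
  have e2 : (∫ y in (-a)..d, f y) + (∫ y in d..a, f y) = ∫ y in (-a)..a, f y :=
    integral_add_adjacent_intervals (cf.intervalIntegrable _ _) (cf.intervalIntegrable _ _)
  have n1 : 0 ≤ ∫ y in (-a)..c, f y :=
    intervalIntegral.integral_nonneg hc.1 (fun u _ => hf u)
  have n2 : 0 ≤ ∫ y in d..a, f y :=
    intervalIntegral.integral_nonneg hd.2 (fun u _ => hf u)
  linarith

lemma sup_bound (ha : 0 < a) {t : ℝ} (htt : t ∈ Icc (0:ℝ) T) {x : ℝ}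
    (hxm : x ∈ Icc (-a) a) :
    (h x t)^2 ≤ (1 + 1/(2*a)) * max 1 (∫ y in (-a)..a, ((h y t)^2 + (hx y t)^2)) := by
  have haa : -a ≤ a := by linarith
  have ch : Continuous fun y => h y t := cont_slice_x sol.cont_h htt
  have chx : Continuous fun y => hx y t := cont_slice_x sol.cont_hx htt
  set E := ∫ y in (-a)..a, ((h y t)^2 + (hx y t)^2) with hE
  set V := max 1 E with hV
  have hEV : E ≤ V := le_max_right _ _
  have hV1 : (1:ℝ) ≤ V := le_max_left _ _
  have hsum : Continuous fun y => (h y t)^2 + (hx y t)^2 := (ch.pow 2).add (chx.pow 2)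
  have hsq : (∫ y in (-a)..a, (h y t)^2) ≤ E := by
    apply intervalIntegral.integral_mono_on haa ((ch.pow 2).intervalIntegrable _ _)
      (hsum.intervalIntegrable _ _)
    intro y _
    simp only [Pi.add_apply, Pi.pow_apply]
    nlinarith [sq_nonneg (hx y t)]
  obtain ⟨x₀, hx₀m, hmin⟩ := isCompact_Icc.exists_isMinOn
    (Set.nonempty_Icc.mpr haa) ((ch.pow 2).continuousOn (s := Icc (-a) a))
  have h2a : 2*a*(h x₀ t)^2 ≤ ∫ y in (-a)..a, (h y t)^2 := by
    have := intervalIntegral.integral_mono_on haa intervalIntegrable_const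
      ((ch.pow 2).intervalIntegrable (μ := volume) (-a) a)
      (fun y hy => hmin hy)
    rw [intervalIntegral.integral_const] at this
    calc 2*a*(h x₀ t)^2 = (a - -a) • (h x₀ t)^2 := by rw [smul_eq_mul]; ring
      _ ≤ _ := this
  have ftc : (h x t)^2 - (h x₀ t)^2 = ∫ y in x₀..x, 2 * h y t * hx y t := by
    rw [intervalIntegral.integral_eq_sub_of_hasDerivAt
      (f := fun y => (h y t)^2) (fun y _ => by
        have := (sol.deriv_hx y t htt).fun_pow 2
        refine this.congr_deriv ?_
        push_cast; ring)
      (((continuous_const.fun_mul ch).fun_mul chx).intervalIntegrable _ _)]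
  have hub : (∫ y in x₀..x, 2 * h y t * hx y t) ≤ E := by
    rcases le_total x₀ x with hle | hle
    · calc (∫ y in x₀..x, 2 * h y t * hx y t)
          ≤ ∫ y in x₀..x, ((h y t)^2 + (hx y t)^2) := by
            apply intervalIntegral.integral_mono_on hle
              (((continuous_const.mul ch).mul chx).intervalIntegrable _ _)
              (hsum.intervalIntegrable _ _)
            intro y _
            exact two_mul_le_add_sq (h y t) (hx y t)
        _ ≤ E := integral_trap ha hsum (fun y => by positivity) hx₀m hxm hle
    · rw [intervalIntegral.integral_symm]
      calc -(∫ y in x..x₀, 2 * h y t * hx y t)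
          = ∫ y in x..x₀, -(2 * h y t * hx y t) := (intervalIntegral.integral_neg).symm
        _ ≤ ∫ y in x..x₀, ((h y t)^2 + (hx y t)^2) := by
            apply intervalIntegral.integral_mono_on hle
              ((((continuous_const.mul ch).mul chx).neg).intervalIntegrable _ _)
              (hsum.intervalIntegrable _ _)
            intro y _
            simp only [Pi.neg_apply, Pi.mul_apply]
            nlinarith [sq_nonneg (h y t + hx y t)]
        _ ≤ E := integral_trap ha hsum (fun y => by positivity) hxm hx₀m hle
  have hx₀le : (h x₀ t)^2 ≤ E / (2*a) := by
    rw [le_div_iff₀ (by linarith : (0:ℝ) < 2*a)]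
    nlinarith
  have hxt : (h x t)^2 ≤ E/(2*a) + E := by linarith
  have hdiv : E/(2*a) ≤ V/(2*a) := by gcongr
  have hexp : (1+1/(2*a))*V = V/(2*a) + V := by field_simp; ring
  linarith


lemma deriv_bound (ha : 0 < a) (hS : 0 < S) (hε1 : 0 < ε) (hε2 : ε ≤ 1)
    {t : ℝ} (htt : t ∈ Icc (0:ℝ) T) :
    (∫ x in (-a)..a, 2 * ht x t * (h x t - hxx x t))
      ≤ C0 a S * (Real.sqrt (max 1 (∫ y in (-a)..a, ((h y t)^2 + (hx y t)^2))))^5 := by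
  have haa : -a ≤ a := by linarith
  have ch : Continuous fun y => h y t := cont_slice_x sol.cont_h htt
  have chx : Continuous fun y => hx y t := cont_slice_x sol.cont_hx htt
  have chxxx : Continuous fun y => hxxx y t := cont_slice_x sol.cont_hxxx htt
  rw [deriv_value_eq sol ha hS htt]
  set E := ∫ y in (-a)..a, ((h y t)^2 + (hx y t)^2) with hE
  set V := max 1 E with hV
  set W := Real.sqrt V with hW
  set K := (1:ℝ)+1/(2*a) with hK
  set M := Real.sqrt K * W with hM
  have hV1 : (1:ℝ) ≤ V := le_max_left _ _
  have hEV : E ≤ V := le_max_right _ _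
  have hV0 : (0:ℝ) < V := by linarith
  have hW0 : 0 ≤ W := Real.sqrt_nonneg _
  have hW2 : W^2 = V := Real.sq_sqrt hV0.le
  have hW1 : (1:ℝ) ≤ W := by nlinarith
  have hK0 : (0:ℝ) < K := by rw [hK]; positivity
  have hKs : (Real.sqrt K)^2 = K := Real.sq_sqrt hK0.le
  have hKn : 0 ≤ Real.sqrt K := Real.sqrt_nonneg _
  have hM0 : (0:ℝ) ≤ M := mul_nonneg hKn hW0
  have habs : ∀ y ∈ Icc (-a) a, |h y t| ≤ M := by
    intro y hy
    have h1 : (h y t)^2 ≤ K * V := sup_bound sol ha htt hy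
    clear_value E V W K M
    have h2 : (h y t)^2 ≤ M^2 := by
      have : M^2 = K * V := by rw [hM, mul_pow, hKs, hW2]
      linarith
    have := Real.sqrt_le_sqrt h2
    rwa [Real.sqrt_sq_eq_abs, Real.sqrt_sq hM0] at this
  have hpt : ∀ y ∈ Icc (-a) a,
      (-((h y t)^2 * hxxx y t) + 2*S*((|h y t|^3 + ε) * ((hx y t)^2 - (hxxx y t)^2)))
        ≤ 2*S*(M^3+1)*(hx y t)^2 + M/(8*S) := by
    intro y hy
    have hyy := habs y hy
    clear_value V W K M
    set A := |h y t| with hA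
    set B := |hxxx y t| with hB
    have hA0 : 0 ≤ A := abs_nonneg _
    have hB0 : 0 ≤ B := abs_nonneg _
    have hA2 : (h y t)^2 = A^2 := (sq_abs _).symm
    have hB2 : (hxxx y t)^2 = B^2 := (sq_abs _).symm
    have hAM : A ≤ M := hyy
    have h8 : (0:ℝ) < 8*S := by linarith
    have young : A^2*B ≤ 2*S*(A^3*B^2) + A/(8*S) := by
      have key : (A^2*B - 2*S*(A^3*B^2))*(8*S) ≤ A := by
        nlinarith [mul_nonneg hA0 (sq_nonneg (4*S*A*B - 1))]
      have := (le_div_iff₀ h8).mpr key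
      linarith
    have e1 : -((h y t)^2 * hxxx y t) ≤ A^2 * B := by
      calc -((h y t)^2 * hxxx y t) = (h y t)^2 * (-(hxxx y t)) := by ring
        _ ≤ (h y t)^2 * B := mul_le_mul_of_nonneg_left (neg_le_abs _) (sq_nonneg _)
        _ = A^2 * B := by rw [hA2]
    have f1 : 2*S*(A^3*(hx y t)^2) ≤ 2*S*(M^3*(hx y t)^2) :=
      mul_le_mul_of_nonneg_left
        (mul_le_mul_of_nonneg_right (pow_le_pow_left₀ hA0 hAM 3) (sq_nonneg _))
        (by linarith)
    have f2 : 2*S*(ε*(hx y t)^2) ≤ 2*S*(1*(hx y t)^2) :=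
      mul_le_mul_of_nonneg_left
        (mul_le_mul_of_nonneg_right hε2 (sq_nonneg _)) (by linarith)
    have f3 : (0:ℝ) ≤ 2*S*(ε*B^2) := by positivity
    have f4 : A/(8*S) ≤ M/(8*S) := by gcongr
    have ex1 : 2*S*((A^3 + ε) * ((hx y t)^2 - B^2))
        = 2*S*(A^3*(hx y t)^2) + 2*S*(ε*(hx y t)^2) - 2*S*(A^3*B^2) - 2*S*(ε*B^2) := by ring
    have ex2 : 2*S*(M^3+1)*(hx y t)^2
        = 2*S*(M^3*(hx y t)^2) + 2*S*(1*(hx y t)^2) := by ring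
    have hgoal : -((h y t)^2 * hxxx y t) + 2*S*((A^3 + ε) * ((hx y t)^2 - B^2))
        ≤ 2*S*(M^3+1)*(hx y t)^2 + M/(8*S) := by
      rw [ex1, ex2]
      linarith [young, e1, f1, f2, f3, f4]
    calc -((h y t)^2 * hxxx y t) + 2*S*((|h y t|^3 + ε) * ((hx y t)^2 - (hxxx y t)^2))
        = -((h y t)^2 * hxxx y t) + 2*S*((A^3 + ε) * ((hx y t)^2 - B^2)) := by
          rw [← hA, ← hB2]
      _ ≤ _ := hgoal
  have cR : Continuous fun y => (-((h y t)^2 * hxxx y t)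
      + 2*S*((|h y t|^3 + ε) * ((hx y t)^2 - (hxxx y t)^2))) := by
    apply Continuous.add
    · exact ((ch.pow 2).mul chxxx).neg
    · exact continuous_const.mul (((ch.abs.pow 3).add continuous_const).mul
        ((chx.pow 2).sub (chxxx.pow 2)))
  have cRHS : Continuous fun y => 2*S*(M^3+1)*(hx y t)^2 + M/(8*S) :=
    (continuous_const.mul (chx.pow 2)).add continuous_const
  have int_le : (∫ y in (-a)..a, (-((h y t)^2 * hxxx y t)
      + 2*S*((|h y t|^3 + ε) * ((hx y t)^2 - (hxxx y t)^2))))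
      ≤ ∫ y in (-a)..a, (2*S*(M^3+1)*(hx y t)^2 + M/(8*S)) :=
    intervalIntegral.integral_mono_on haa (cR.intervalIntegrable _ _)
      (cRHS.intervalIntegrable _ _) hpt
  have hxint : (∫ y in (-a)..a, (hx y t)^2) ≤ E := by
    apply intervalIntegral.integral_mono_on haa ((chx.pow 2).intervalIntegrable _ _)
      (((ch.pow 2).add (chx.pow 2)).intervalIntegrable _ _)
    intro y _
    simp only [Pi.add_apply, Pi.pow_apply]
    nlinarith [sq_nonneg (h y t)]
  have hxint0 : (0:ℝ) ≤ ∫ y in (-a)..a, (hx y t)^2 :=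
    intervalIntegral.integral_nonneg haa (fun y _ => sq_nonneg _)
  have expand : (∫ y in (-a)..a, (2*S*(M^3+1)*(hx y t)^2 + M/(8*S)))
      = 2*S*(M^3+1)*(∫ y in (-a)..a, (hx y t)^2) + (2*a)*(M/(8*S)) := by
    rw [intervalIntegral.integral_add ((continuous_const.fun_mul (chx.fun_pow 2)).intervalIntegrable _ _)
      (intervalIntegrable_const), intervalIntegral.integral_const_mul,
      intervalIntegral.integral_const, smul_eq_mul]
    ring
  have coef : (0:ℝ) ≤ 2*S*(M^3+1) := by positivity
  have w25 : W^2 ≤ W^5 := pow_le_pow_right₀ hW1 (by norm_num)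
  have w15 : W ≤ W^5 := by
    calc W = W^1 := (pow_one W).symm
      _ ≤ W^5 := pow_le_pow_right₀ hW1 (by norm_num)
  have m1 : 2*S*(M^3+1)*(∫ y in (-a)..a, (hx y t)^2) ≤ 2*S*(M^3+1)*V := by
    apply mul_le_mul_of_nonneg_left _ coef
    linarith
  have final : 2*S*(M^3+1)*V + (2*a)*(M/(8*S)) ≤ C0 a S * W^5 := by
    have hMw : M = Real.sqrt K * W := hM
    have c1 : 2*S*W^2 ≤ 2*S*W^5 := mul_le_mul_of_nonneg_left w25 (by linarith)
    have c2 : a*Real.sqrt K/(4*S)*W ≤ a*Real.sqrt K/(4*S)*W^5 :=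
      mul_le_mul_of_nonneg_left w15 (by positivity)
    have hK' : Real.sqrt K = Real.sqrt (1+1/(2*a)) := by rw [hK]
    have lhs_eq : 2*S*(M^3+1)*V + (2*a)*(M/(8*S))
        = 2*S*(Real.sqrt K)^3*W^5 + 2*S*W^2 + a*Real.sqrt K/(4*S)*W := by
      rw [hMw, ← hW2]; ring
    have rhs_eq : C0 a S * W^5
        = 2*S*(Real.sqrt K)^3*W^5 + 2*S*W^5 + a*Real.sqrt K/(4*S)*W^5 := by
      rw [C0, ← hK']; ring
    rw [lhs_eq, rhs_eq]
    linarith [c1, c2]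
  calc _ ≤ ∫ y in (-a)..a, (2*S*(M^3+1)*(hx y t)^2 + M/(8*S)) := int_le
    _ = 2*S*(M^3+1)*(∫ y in (-a)..a, (hx y t)^2) + (2*a)*(M/(8*S)) := expand
    _ ≤ 2*S*(M^3+1)*V + (2*a)*(M/(8*S)) := by linarith [m1]
    _ ≤ C0 a S * W^5 := final


lemma energy_comparison (ha : 0 < a) (hS : 0 < S) (hε1 : 0 < ε) (hε2 : ε ≤ 1)
    {t : ℝ} (ht0 : 0 ≤ t) (htT : t ≤ T)
    (hlt : (3/2) * C0 a S * t
      < (max 1 (∫ x in (-a)..a, ((h x 0)^2 + (hx x 0)^2))) ^ (-(3:ℝ)/2)) :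
    max 1 (∫ x in (-a)..a, ((h x t)^2 + (hx x t)^2))
      ≤ ((max 1 (∫ x in (-a)..a, ((h x 0)^2 + (hx x 0)^2))) ^ (-(3:ℝ)/2)
          - (3/2) * C0 a S * t) ^ (-(2:ℝ)/3) := by
  have hT0 : (0:ℝ) ≤ T := le_trans ht0 htT
  have h0T : (0:ℝ) ∈ Icc (0:ℝ) T := ⟨le_refl 0, hT0⟩
  have htTm : t ∈ Icc (0:ℝ) T := ⟨ht0, htT⟩
  set C := C0 a S with hCdef
  have hC : 0 < C := C0_pos ha hS
  set Psi : ℝ → ℝ := fun s => ∫ x in (-a)..a, ((h x s)^2 + (hx x s)^2) with hPsi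
  set V0 : ℝ := max 1 (Psi 0) with hV0def
  have hV01 : (1:ℝ) ≤ V0 := le_max_left _ _
  have hV0pos : (0:ℝ) < V0 := by linarith
  have hPsi0 : Psi 0 ≤ V0 := le_max_right _ _
  have hPsiCont : ContinuousOn Psi (Icc 0 T) :=
    fun s hs => (hasDeriv_energy sol ha hs).continuousWithinAt
  -- the δ-approximation claim
  have hdel : ∀ δ : ℝ, 0 < δ → (3/2) * C * t < (V0 + δ) ^ (-(3:ℝ)/2) →
      Psi t ≤ ((V0 + δ) ^ (-(3:ℝ)/2) - (3/2) * C * t) ^ (-(2:ℝ)/3) := by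
    intro δ hδ hδlt
    have hVδ : (0:ℝ) < V0 + δ := by linarith
    have hVδ1 : (1:ℝ) < V0 + δ := by linarith
    set Xδ : ℝ := (V0 + δ) ^ (-(3:ℝ)/2) with hXδ
    set b : ℝ → ℝ := fun s => Xδ - (3/2) * C * s with hb
    set B : ℝ → ℝ := fun s => (b s) ^ (-(2:ℝ)/3) with hB
    have hXδpos : 0 < Xδ := Real.rpow_pos_of_pos hVδ _
    have hbpos : ∀ s ∈ Icc (0:ℝ) t, 0 < b s := by
      intro s hs
      have : (3/2) * C * s ≤ (3/2) * C * t := by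
        apply mul_le_mul_of_nonneg_left hs.2 (by linarith)
      simp only [hb]
      linarith
    have hbX : ∀ s ∈ Icc (0:ℝ) t, b s ≤ Xδ := by
      intro s hs
      have h0s : 0 ≤ (3/2) * C * s := mul_nonneg (by positivity) hs.1
      simp only [hb]; linarith
    have hXinv : (Xδ) ^ (-(2:ℝ)/3) = V0 + δ := by
      rw [hXδ, ← Real.rpow_mul hVδ.le]; norm_num
    have hb0 : b 0 = Xδ := by simp [hb]
    have hB0 : B 0 = V0 + δ := by
      show (b 0) ^ (-(2:ℝ)/3) = V0 + δ
      rw [hb0]; exact hXinv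
    have hB_ge : ∀ s ∈ Icc (0:ℝ) t, V0 + δ ≤ B s := by
      intro s hs
      rw [← hXinv]
      exact Real.rpow_le_rpow_of_nonpos (hbpos s hs) (hbX s hs) (by norm_num)
    have hB_deriv : ∀ s ∈ Icc (0:ℝ) t, HasDerivAt B (C * (B s) ^ ((5:ℝ)/2)) s := by
      intro s hs
      have hb' : HasDerivAt b (-(3/2 * C)) s := by
        have hh := (hasDerivAt_const s Xδ).fun_sub ((hasDerivAt_id s).const_mul ((3:ℝ)/2 * C))
        refine hh.congr_deriv ?_
        ring
      have := hb'.rpow_const (p := -(2:ℝ)/3) (Or.inl (ne_of_gt (hbpos s hs)))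
      convert this using 1
      have e1 : (B s) ^ ((5:ℝ)/2) = (b s) ^ (-(2:ℝ)/3 * ((5:ℝ)/2)) := by
        rw [hB, ← Real.rpow_mul (hbpos s hs).le]
      have e2 : (-(2:ℝ)/3 * ((5:ℝ)/2)) = -(2:ℝ)/3 - 1 + ((0:ℝ)) := by norm_num
      rw [e1]
      rw [show (-(2:ℝ)/3 * ((5:ℝ)/2)) = (-(2:ℝ)/3 - 1) by norm_num]
      ring
    have hB_cont : ContinuousOn B (Icc (0:ℝ) t) := by
      apply ContinuousOn.rpow_const
      · exact (continuous_const.sub (continuous_const.mul continuous_id)).continuousOn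
      · exact fun s hs => Or.inl (ne_of_gt (hbpos s hs))
    -- crossing argument
    by_contra hcon
    push_neg at hcon
    set A := (Icc (0:ℝ) t) ∩ (fun s => Psi s - B s) ⁻¹' (Ici (0:ℝ)) with hA
    have hclosed : IsClosed A := by
      apply ContinuousOn.preimage_isClosed_of_isClosed
      · exact (hPsiCont.mono (Icc_subset_Icc le_rfl htT)).sub hB_cont
      · exact isClosed_Icc
      · exact isClosed_Ici
    have hBt_eq : B t = (Xδ - 3/2*C*t) ^ (-(2:ℝ)/3) := rfl
    have htA : t ∈ A := ⟨⟨ht0, le_rfl⟩, by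
      simp only [Set.mem_preimage, Set.mem_Ici, sub_nonneg]
      rw [hBt_eq]; linarith⟩
    have hA_ne : A.Nonempty := ⟨t, htA⟩
    have hA_bdd : BddBelow A := ⟨0, fun s hs => hs.1.1⟩
    set t₁ := sInf A with ht₁
    have ht₁A : t₁ ∈ A := hclosed.csInf_mem hA_ne hA_bdd
    have ht₁m : t₁ ∈ Icc (0:ℝ) t := ht₁A.1
    have ht₁Psi : B t₁ ≤ Psi t₁ := by
      have := ht₁A.2
      simp [Set.mem_preimage] at this
      linarith
    have ht₁pos : 0 < t₁ := by
      rcases lt_or_eq_of_le ht₁m.1 with hp | hp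
      · exact hp
      · exfalso
        have : B 0 ≤ Psi 0 := by rw [← hp] at ht₁Psi; exact ht₁Psi
        rw [hB0] at this
        linarith
    have hbefore : ∀ s, 0 ≤ s → s < t₁ → Psi s < B s := by
      intro s hs0 hst₁
      have hnot : s ∉ A := notMem_of_lt_csInf hst₁ hA_bdd
      have hsm : s ∈ Icc (0:ℝ) t := ⟨hs0, le_trans hst₁.le ht₁m.2⟩
      by_contra hcon2
      push_neg at hcon2
      exact hnot ⟨hsm, by simp [Set.mem_preimage]; linarith⟩
    -- monotonicity of g = Psi - B on [0, t₁]
    set g : ℝ → ℝ := fun s => Psi s - B s with hg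
    have hIccsub : Icc (0:ℝ) t₁ ⊆ Icc (0:ℝ) t := Icc_subset_Icc le_rfl ht₁m.2
    have hgc : ContinuousOn g (Icc (0:ℝ) t₁) :=
      ((hPsiCont.mono (Icc_subset_Icc le_rfl (le_trans ht₁m.2 htT)))).sub
        (hB_cont.mono hIccsub) |>.congr (fun s _ => rfl)
    have hgderiv : ∀ s ∈ interior (Icc (0:ℝ) t₁),
        HasDerivAt g ((∫ x in (-a)..a, 2 * ht x s * (h x s - hxx x s))
          - C * (B s) ^ ((5:ℝ)/2)) s := by
      intro s hsi
      rw [interior_Icc] at hsi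
      have hsm : s ∈ Icc (0:ℝ) t := ⟨hsi.1.le, le_trans hsi.2.le ht₁m.2⟩
      have hsT : s ∈ Icc (0:ℝ) T := ⟨hsi.1.le, le_trans hsm.2 htT⟩
      have hPd : HasDerivAt Psi (∫ x in (-a)..a, 2 * ht x s * (h x s - hxx x s)) s := by
        have hnb : Icc (0:ℝ) T ∈ 𝓝 s := by
          apply Icc_mem_nhds hsi.1
          exact lt_of_lt_of_le hsi.2 (le_trans ht₁m.2 htT)
        exact (hasDeriv_energy sol ha hsT).hasDerivAt hnb
      exact hPd.sub (hB_deriv s hsm)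
    have hgmono : AntitoneOn g (Icc (0:ℝ) t₁) := by
      apply antitoneOn_of_deriv_nonpos (convex_Icc _ _) hgc
      · intro s hsi
        exact ((hgderiv s hsi).differentiableAt).differentiableWithinAt
      · intro s hsi
        rw [(hgderiv s hsi).deriv]
        have hsi' := hsi
        rw [interior_Icc] at hsi'
        have hsm : s ∈ Icc (0:ℝ) t := ⟨hsi'.1.le, le_trans hsi'.2.le ht₁m.2⟩
        have hsT : s ∈ Icc (0:ℝ) T := ⟨hsi'.1.le, le_trans hsm.2 htT⟩
        have hD := deriv_bound sol ha hS hε1 hε2 hsT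
        have hmaxpos : (0:ℝ) < max 1 (Psi s) := lt_of_lt_of_le one_pos (le_max_left _ _)
        have hsqrt : (Real.sqrt (max 1 (Psi s)))^5 = (max 1 (Psi s)) ^ ((5:ℝ)/2) := by
          rw [Real.sqrt_eq_rpow, ← Real.rpow_natCast ((max 1 (Psi s)) ^ ((1:ℝ)/2)) 5,
            ← Real.rpow_mul hmaxpos.le]
          norm_num
        have hVB : max 1 (Psi s) ≤ B s := by
          apply max_le
          · linarith [hB_ge s hsm]
          · exact (hbefore s hsi'.1.le hsi'.2).le
        have hr : (max 1 (Psi s)) ^ ((5:ℝ)/2) ≤ (B s) ^ ((5:ℝ)/2) :=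
          Real.rpow_le_rpow hmaxpos.le hVB (by norm_num)
        rw [hsqrt] at hD
        have : (∫ x in (-a)..a, 2 * ht x s * (h x s - hxx x s)) ≤ C * (B s) ^ ((5:ℝ)/2) := by
          calc (∫ x in (-a)..a, 2 * ht x s * (h x s - hxx x s))
              ≤ C * (max 1 (Psi s)) ^ ((5:ℝ)/2) := hD
            _ ≤ C * (B s) ^ ((5:ℝ)/2) := mul_le_mul_of_nonneg_left hr hC.le
        linarith
    have hg0 : g 0 < 0 := by
      simp only [hg]
      rw [hB0]
      linarith
    have hgt₁ : 0 ≤ g t₁ := by simp only [hg]; linarith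
    have := hgmono (left_mem_Icc.mpr ht₁pos.le) (right_mem_Icc.mpr ht₁pos.le) ht₁pos.le
    linarith
  -- pass to the limit δ → 0⁺
  have hbase : (0:ℝ) < V0 ^ (-(3:ℝ)/2) - (3/2) * C * t := by linarith
  have hmain : Psi t ≤ (V0 ^ (-(3:ℝ)/2) - (3/2) * C * t) ^ (-(2:ℝ)/3) := by
    have l1 : Filter.Tendsto (fun δ : ℝ => V0 + δ) (𝓝 0) (𝓝 V0) := by
      have hcadd : Continuous (fun δ : ℝ => V0 + δ) := by fun_prop
      have := hcadd.tendsto (0:ℝ)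
      simpa using this
    have hc3 : Filter.Tendsto (fun δ : ℝ => (V0 + δ) ^ (-(3:ℝ)/2)) (𝓝 0)
        (𝓝 (V0 ^ (-(3:ℝ)/2))) :=
      ((Real.continuousAt_rpow_const V0 _ (Or.inl hV0pos.ne')).tendsto).comp l1
    have h3 : Filter.Tendsto (fun δ : ℝ => (V0 + δ) ^ (-(3:ℝ)/2) - (3/2) * C * t) (𝓝 0)
        (𝓝 (V0 ^ (-(3:ℝ)/2) - (3/2) * C * t)) := hc3.sub_const _
    have hcont : Filter.Tendsto
        (fun δ : ℝ => ((V0 + δ) ^ (-(3:ℝ)/2) - (3/2) * C * t) ^ (-(2:ℝ)/3))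
        (nhdsWithin 0 (Ioi 0))
        (𝓝 ((V0 ^ (-(3:ℝ)/2) - (3/2) * C * t) ^ (-(2:ℝ)/3))) := by
      apply Filter.Tendsto.mono_left _ nhdsWithin_le_nhds
      exact ((Real.continuousAt_rpow_const _ _ (Or.inl hbase.ne')).tendsto).comp h3
    have hev : ∀ᶠ δ in nhdsWithin (0:ℝ) (Ioi 0),
        Psi t ≤ ((V0 + δ) ^ (-(3:ℝ)/2) - (3/2) * C * t) ^ (-(2:ℝ)/3) := by
      have hev0 : ∀ᶠ δ in 𝓝 (0:ℝ), (3/2) * C * t < (V0 + δ) ^ (-(3:ℝ)/2) :=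
        hc3.eventually (eventually_gt_nhds hlt)
      filter_upwards [hev0.filter_mono nhdsWithin_le_nhds, self_mem_nhdsWithin]
        with δ h1 h2
      exact hdel δ h2 h1
    exact ge_of_tendsto hcont hev
  apply max_le _ hmain
  calc (1:ℝ) ≤ V0 := hV01
    _ = (V0 ^ (-(3:ℝ)/2)) ^ (-(2:ℝ)/3) := by rw [← Real.rpow_mul hV0pos.le]; norm_num
    _ ≤ (V0 ^ (-(3:ℝ)/2) - (3/2) * C * t) ^ (-(2:ℝ)/3) := by
      apply Real.rpow_le_rpow_of_nonpos hbase _ (by norm_num)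
      nlinarith [mul_nonneg (mul_nonneg (by norm_num : (0:ℝ) ≤ 3/2) hC.le) ht0]

end ModelIAux

/-- Local in time a priori `H¹` estimate for regularized Model I, with a constant
depending only on `S` and `a`, uniform in `ε ∈ (0,1]`. -/
theorem modelI_local_estimate
    (a S : ℝ) (ha : 0 < a) (hS : 0 < S) :
    ∃ C : ℝ, 0 < C ∧
      ∀ ε ∈ Set.Ioc (0:ℝ) 1, ∀ T : ℝ, 0 < T →
      ∀ h hx hxx hxxx hxxxx ht : ℝ → ℝ → ℝ,
        ClassicalSolutionI a S ε T h hx hxx hxxx hxxxx ht →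
        (∀ t : ℝ, 0 ≤ t →
            t < min T ((2 / (3 * C)) *
              (max 1 (∫ x in (-a)..a, ((h x 0)^2 + (hx x 0)^2))) ^ (-(3:ℝ)/2)) →
            max 1 (∫ x in (-a)..a, ((h x t)^2 + (hx x t)^2)) ≤
              ((max 1 (∫ x in (-a)..a, ((h x 0)^2 + (hx x 0)^2))) ^ (-(3:ℝ)/2)
                - (3/2) * C * t) ^ (-(2:ℝ)/3)) ∧
        (∀ t : ℝ, 0 ≤ t →
            t ≤ min T ((1 / (3 * C)) *
              (max 1 (∫ x in (-a)..a, ((h x 0)^2 + (hx x 0)^2))) ^ (-(3:ℝ)/2)) →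
            (∫ x in (-a)..a, ((h x t)^2 + (hx x t)^2)) ≤
              (2:ℝ) ^ ((2:ℝ)/3) * max 1 (∫ x in (-a)..a, ((h x 0)^2 + (hx x 0)^2))) := by
  refine ⟨C0 a S, C0_pos ha hS, ?_⟩
  intro ε hε T hT h hx hxx hxxx hxxxx ht sol
  have hC : 0 < C0 a S := C0_pos ha hS
  set C := C0 a S with hCdef
  set V0 := max 1 (∫ x in (-a)..a, ((h x 0)^2 + (hx x 0)^2)) with hV0def
  have hV01 : (1:ℝ) ≤ V0 := le_max_left _ _
  have hV0pos : (0:ℝ) < V0 := lt_of_lt_of_le one_pos hV01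
  have hX : 0 < V0 ^ (-(3:ℝ)/2) := Real.rpow_pos_of_pos hV0pos _
  constructor
  · intro t ht0 htlt
    have ht1 : t < T := lt_of_lt_of_le htlt (min_le_left _ _)
    have ht2 : t < (2 / (3 * C)) * V0 ^ (-(3:ℝ)/2) := lt_of_lt_of_le htlt (min_le_right _ _)
    have h3C : (0:ℝ) < 3 * C := by linarith
    have hconv : (3/2) * C * t < V0 ^ (-(3:ℝ)/2) := by
      rw [div_mul_eq_mul_div, lt_div_iff₀ h3C] at ht2
      nlinarith
    exact ModelIAux.energy_comparison sol ha hS hε.1 hε.2 ht0 ht1.le hconv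
  · intro t ht0 htle
    have ht1 : t ≤ T := le_trans htle (min_le_left _ _)
    have ht2 : t ≤ (1 / (3 * C)) * V0 ^ (-(3:ℝ)/2) := le_trans htle (min_le_right _ _)
    have hhalf : (3/2) * C * t ≤ V0 ^ (-(3:ℝ)/2) / 2 := by
      have step : (3/2) * C * t ≤ (3/2) * C * ((1 / (3 * C)) * V0 ^ (-(3:ℝ)/2)) := by
        apply mul_le_mul_of_nonneg_left ht2 (by positivity)
      have e : (3/2) * C * ((1 / (3 * C)) * V0 ^ (-(3:ℝ)/2)) = V0 ^ (-(3:ℝ)/2) / 2 := by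
        field_simp
      linarith
    have hconv : (3/2) * C * t < V0 ^ (-(3:ℝ)/2) := by linarith
    have hcomp := ModelIAux.energy_comparison sol ha hS hε.1 hε.2 ht0 ht1 hconv
    have hbase : (0:ℝ) < V0 ^ (-(3:ℝ)/2) - (3/2) * C * t := by linarith
    have hmono : (V0 ^ (-(3:ℝ)/2) - (3/2) * C * t) ^ (-(2:ℝ)/3)
        ≤ (V0 ^ (-(3:ℝ)/2) / 2) ^ (-(2:ℝ)/3) := by
      apply Real.rpow_le_rpow_of_nonpos (by positivity) (by linarith) (by norm_num)
    have hcompute : (V0 ^ (-(3:ℝ)/2) / 2) ^ (-(2:ℝ)/3) = (2:ℝ) ^ ((2:ℝ)/3) * V0 := by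
      have e1 : ((2:ℝ)⁻¹) ^ (-(2:ℝ)/3) = (2:ℝ) ^ ((2:ℝ)/3) := by
        rw [Real.inv_rpow (by norm_num : (0:ℝ) ≤ 2), ← Real.rpow_neg (by norm_num : (0:ℝ) ≤ 2)]
        norm_num
      have e2 : (V0 ^ (-(3:ℝ)/2)) ^ (-(2:ℝ)/3) = V0 := by
        rw [← Real.rpow_mul hV0pos.le]; norm_num
      rw [div_eq_mul_inv, Real.mul_rpow hX.le (by norm_num : (0:ℝ) ≤ (2:ℝ)⁻¹), e1, e2, mul_comm]
    calc (∫ x in (-a)..a, ((h x t)^2 + (hx x t)^2))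
        ≤ max 1 (∫ x in (-a)..a, ((h x t)^2 + (hx x t)^2)) := le_max_right _ _
      _ ≤ (V0 ^ (-(3:ℝ)/2) - (3/2) * C * t) ^ (-(2:ℝ)/3) := hcomp
      _ ≤ (V0 ^ (-(3:ℝ)/2) / 2) ^ (-(2:ℝ)/3) := hmono
      _ = (2:ℝ) ^ ((2:ℝ)/3) * V0 := hcompute
end

section
/- Let h be a classical periodic solution of the regularized Model I equation on [0,T], and define 𝓔(u) = (1/2)·∫_{−a}^{a} ( u_x(x)² − u(x)² ) dx. Then for every T′ ∈ [0,T], 𝓔(h(·,T′)) + S·∫_0^{T′} ∫_{−a}^{a} (|h|³ + ε)·( h_x + h_xxx )² dx dt = 𝓔(h(·,0)) − (1/2)·∫_0^{T′} ∫_{−a}^{a} h²·h_xxx dx dt. -/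
open Set intervalIntegral

private lemma unifCont {a T : ℝ} (F : ℝ → ℝ → ℝ)
    (hF : ContinuousOn (fun p : ℝ × ℝ => F p.1 p.2) (Set.univ ×ˢ Set.Icc 0 T)) :
    ∀ ε > (0:ℝ), ∃ δ > (0:ℝ), ∀ x ∈ Set.Icc (-a) a, ∀ s ∈ Set.Icc (0:ℝ) T, ∀ t ∈ Set.Icc (0:ℝ) T,
      |s - t| < δ → |F x s - F x t| < ε := by
  have hK : IsCompact (Set.Icc (-a) a ×ˢ Set.Icc (0:ℝ) T) := isCompact_Icc.prod isCompact_Icc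
  have hFK : ContinuousOn (fun p : ℝ × ℝ => F p.1 p.2) (Set.Icc (-a) a ×ˢ Set.Icc (0:ℝ) T) :=
    hF.mono (Set.prod_mono (Set.subset_univ _) le_rfl)
  have hu := hK.uniformContinuousOn_of_continuous hFK
  intro ε hε
  obtain ⟨δ, hδ, H⟩ := Metric.uniformContinuousOn_iff.1 hu ε hε
  refine ⟨δ, hδ, fun x hxm s hs t htm hst => ?_⟩
  have hd : dist ((x, s) : ℝ × ℝ) (x, t) < δ := by
    rw [Prod.dist_eq]
    simp only [dist_self]
    rw [Real.dist_eq]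
    exact max_lt hδ hst
  have := H (x, s) (Set.mk_mem_prod hxm hs) (x, t) (Set.mk_mem_prod hxm htm) hd
  rwa [Real.dist_eq] at this

private lemma bddCont {a T : ℝ} (F : ℝ → ℝ → ℝ)
    (hF : ContinuousOn (fun p : ℝ × ℝ => F p.1 p.2) (Set.univ ×ˢ Set.Icc 0 T)) :
    ∃ M : ℝ, 0 < M ∧ ∀ x ∈ Set.Icc (-a) a, ∀ t ∈ Set.Icc (0:ℝ) T, |F x t| ≤ M := by
  obtain ⟨C, hC⟩ := (isCompact_Icc.prod isCompact_Icc).exists_bound_of_continuousOn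
    (hF.mono (Set.prod_mono (Set.subset_univ _) le_rfl))
  refine ⟨max C 1, lt_of_lt_of_le one_pos (le_max_right _ _), fun x hx t ht => ?_⟩
  have := hC (x, t) (Set.mk_mem_prod hx ht)
  rw [Real.norm_eq_abs] at this
  exact this.trans (le_max_left _ _)

private lemma periodic_deriv {c : ℝ} {f f' : ℝ → ℝ} (hf : ∀ x, HasDerivAt f (f' x) x)
    (hp : ∀ x, f (x + c) = f x) : ∀ x, f' (x + c) = f' x := by
  intro x
  have h1 : HasDerivAt (fun y => f (y + c)) (f' (x + c)) x := by
    have := (hf (x + c)).comp x ((hasDerivAt_id x).add_const c)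
    simp only [mul_one] at this
    exact this
  have h2 : HasDerivAt (fun y => f (y + c)) (f' x) x := by
    have he : (fun y => f (y + c)) = f := funext hp
    rw [he]; exact hf x
  exact h1.unique h2


private lemma contx_of_contOn {T : ℝ} {F : ℝ → ℝ → ℝ}
    (hF : ContinuousOn (fun p : ℝ × ℝ => F p.1 p.2) (Set.univ ×ˢ Set.Icc 0 T))
    {t : ℝ} (htm : t ∈ Set.Icc (0:ℝ) T) : Continuous (fun x => F x t) := by
  rw [← continuousOn_univ]
  have : ContinuousOn ((fun p : ℝ × ℝ => F p.1 p.2) ∘ (fun x : ℝ => (x, t))) Set.univ :=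
    hF.comp (continuous_id.prodMk continuous_const).continuousOn
      (fun x _ => Set.mk_mem_prod (Set.mem_univ x) htm)
  exact this

private lemma key_deriv {a T : ℝ} (ha : 0 < a) (hT : 0 < T)
    (h ht w : ℝ → ℝ → ℝ)
    (hh : ContinuousOn (fun p : ℝ × ℝ => h p.1 p.2) (Set.univ ×ˢ Set.Icc 0 T))
    (hht : ContinuousOn (fun p : ℝ × ℝ => ht p.1 p.2) (Set.univ ×ˢ Set.Icc 0 T))
    (hw : ContinuousOn (fun p : ℝ × ℝ => w p.1 p.2) (Set.univ ×ˢ Set.Icc 0 T))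
    (hderiv : ∀ x : ℝ, ∀ t ∈ Set.Icc (0:ℝ) T,
      HasDerivWithinAt (fun s => h x s) (ht x t) (Set.Icc 0 T) t)
    (hsym : ∀ s ∈ Set.Icc (0:ℝ) T, ∀ t ∈ Set.Icc (0:ℝ) T,
       (∫ x in (-a)..a, h x s * w x t) = ∫ x in (-a)..a, h x t * w x s)
    {t : ℝ} (htm : t ∈ Set.Icc (0:ℝ) T) :
    HasDerivWithinAt (fun s => ∫ x in (-a)..a, h x s * w x s)
      (∫ x in (-a)..a, 2 * (w x t * ht x t)) (Set.Icc 0 T) t := by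
  have haa : -a ≤ a := by linarith
  have hIcc : Set.uIcc (-a) a = Set.Icc (-a) a := Set.uIcc_of_le haa
  -- integrability of products
  have hint : ∀ s ∈ Set.Icc (0:ℝ) T, ∀ u ∈ Set.Icc (0:ℝ) T,
      IntervalIntegrable (fun x => h x s * w x u) MeasureTheory.volume (-a) a := by
    intro s hs u hu
    exact (((contx_of_contOn hh hs).mul (contx_of_contOn hw hu)).continuousOn).intervalIntegrable
  have hintD : IntervalIntegrable (fun x => 2 * (w x t * ht x t)) MeasureTheory.volume (-a) a := by
    exact ((continuous_const.mul ((contx_of_contOn hw htm).mul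
      (contx_of_contOn hht htm))).continuousOn).intervalIntegrable
  obtain ⟨Mw, hMw, hMwb⟩ := bddCont w hw
  obtain ⟨Mt, hMt, hMtb⟩ := bddCont ht hht
  set M := max Mw Mt with hM
  have hM0 : 0 < M := lt_of_lt_of_le hMw (le_max_left _ _)
  rw [hasDerivWithinAt_iff_tendsto_slope]
  rw [Metric.tendsto_nhdsWithin_nhds]
  intro ε hε
  set ε' := ε / (6 * a * M + 1) with hε'def
  have h6 : 0 < 6 * a * M + 1 := by positivity
  have hε' : 0 < ε' := by positivity
  obtain ⟨δ₁, hδ₁, H₁⟩ := unifCont ht hht ε' hε'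
  obtain ⟨δ₂, hδ₂, H₂⟩ := unifCont w hw ε' hε'
  refine ⟨min δ₁ δ₂, lt_min hδ₁ hδ₂, ?_⟩
  intro t' ht'mem hdist
  obtain ⟨ht'Icc, ht'ne⟩ : t' ∈ Set.Icc (0:ℝ) T ∧ t' ≠ t := by
    rcases ht'mem with ⟨h1, h2⟩; exact ⟨h1, by simpa using h2⟩
  rw [Real.dist_eq] at hdist
  have hd1 : |t' - t| < δ₁ := lt_of_lt_of_le hdist (min_le_left _ _)
  have hd2 : |t' - t| < δ₂ := lt_of_lt_of_le hdist (min_le_right _ _)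
  set K : ℝ → ℝ := fun s => ∫ x in (-a)..a, h x s * w x s with hK
  -- step 1: K t' - K t as a single integral
  have step1 : K t' - K t = ∫ x in (-a)..a, (h x t' - h x t) * (w x t' + w x t) := by
    have e1 : ∀ x : ℝ, (h x t' - h x t) * (w x t' + w x t)
        = (h x t' * w x t' - h x t * w x t) + (h x t' * w x t - h x t * w x t') := by
      intro x; ring
    rw [intervalIntegral.integral_congr (fun x _ => e1 x)]
    rw [intervalIntegral.integral_add
      ((hint t' ht'Icc t' ht'Icc).sub (hint t htm t htm))
      ((hint t' ht'Icc t htm).sub (hint t htm t' ht'Icc))]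
    rw [intervalIntegral.integral_sub (hint t' ht'Icc t' ht'Icc) (hint t htm t htm)]
    rw [intervalIntegral.integral_sub (hint t' ht'Icc t htm) (hint t htm t' ht'Icc)]
    rw [hsym t' ht'Icc t htm]
    ring
  -- step 2: slope as an integral
  have step2 : slope K t t'
      = ∫ x in (-a)..a, (t' - t)⁻¹ * ((h x t' - h x t) * (w x t' + w x t)) := by
    rw [intervalIntegral.integral_const_mul, slope_def_field, div_eq_inv_mul, ← step1]
  -- pointwise bound
  have hbound : ∀ x ∈ Set.Icc (-a) a,
      |(t' - t)⁻¹ * ((h x t' - h x t) * (w x t' + w x t)) - 2 * (w x t * ht x t)|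
        ≤ 3 * M * ε' := by
    intro x hx
    set q : ℝ := (h x t' - h x t) / (t' - t) with hq
    -- MVT: q = ht x ξ for some ξ between t and t'
    have hcont_t : ContinuousOn (fun s => h x s) (Set.Icc 0 T) :=
      fun s hs => (hderiv x s hs).continuousWithinAt
    have hqclose : |q - ht x t| < ε' := by
      have main : ∃ ξ ∈ Set.Icc (0:ℝ) T, |ξ - t| < δ₁ ∧ ht x ξ = q := by
        rcases lt_or_gt_of_ne ht'ne with hlt | hgt
        · -- t' < t
          obtain ⟨ξ, hξ, hval⟩ := exists_hasDerivAt_eq_slope (fun s => h x s) (fun s => ht x s)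
            hlt (hcont_t.mono (Set.Icc_subset_Icc ht'Icc.1 htm.2))
            (fun y hy => by
              have hyI : y ∈ Set.Icc (0:ℝ) T :=
                ⟨le_of_lt (lt_of_le_of_lt ht'Icc.1 hy.1), le_of_lt (lt_of_lt_of_le hy.2 htm.2)⟩
              exact (hderiv x y hyI).hasDerivAt (Icc_mem_nhds
                (lt_of_le_of_lt ht'Icc.1 hy.1) (lt_of_lt_of_le hy.2 htm.2)))
          refine ⟨ξ, ⟨le_of_lt (lt_of_le_of_lt ht'Icc.1 hξ.1),
              le_of_lt (lt_of_lt_of_le hξ.2 htm.2)⟩, ?_, ?_⟩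
          · rw [abs_lt] at hd1 ⊢
            constructor <;> [linarith [hξ.1]; linarith [hξ.2]]
          · rw [hval, hq]
            rw [div_eq_div_iff (sub_ne_zero.2 ht'ne.symm) (sub_ne_zero.2 ht'ne)]
            ring
        · -- t < t'
          obtain ⟨ξ, hξ, hval⟩ := exists_hasDerivAt_eq_slope (fun s => h x s) (fun s => ht x s)
            hgt (hcont_t.mono (Set.Icc_subset_Icc htm.1 ht'Icc.2))
            (fun y hy => by
              have hyI : y ∈ Set.Icc (0:ℝ) T :=
                ⟨le_of_lt (lt_of_le_of_lt htm.1 hy.1), le_of_lt (lt_of_lt_of_le hy.2 ht'Icc.2)⟩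
              exact (hderiv x y hyI).hasDerivAt (Icc_mem_nhds
                (lt_of_le_of_lt htm.1 hy.1) (lt_of_lt_of_le hy.2 ht'Icc.2)))
          refine ⟨ξ, ⟨le_of_lt (lt_of_le_of_lt htm.1 hξ.1),
              le_of_lt (lt_of_lt_of_le hξ.2 ht'Icc.2)⟩, ?_, ?_⟩
          · rw [abs_lt] at hd1 ⊢
            constructor <;> [linarith [hξ.1]; linarith [hξ.2]]
          · rw [hval, hq]
      obtain ⟨ξ, hξI, hξd, hξv⟩ := main
      rw [← hξv]
      exact H₁ x hx ξ hξI t htm hξd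
    have hwclose : |w x t' - w x t| < ε' := H₂ x hx t' ht'Icc t htm hd2
    have hwb1 : |w x t'| ≤ M := (hMwb x hx t' ht'Icc).trans (le_max_left _ _)
    have hwb2 : |w x t| ≤ M := (hMwb x hx t htm).trans (le_max_left _ _)
    have htb : |ht x t| ≤ M := (hMtb x hx t htm).trans (le_max_right _ _)
    have key : (t' - t)⁻¹ * ((h x t' - h x t) * (w x t' + w x t)) - 2 * (w x t * ht x t)
        = (q - ht x t) * (w x t' + w x t) + ht x t * (w x t' - w x t) := by
      rw [hq, div_eq_inv_mul]; ring
    rw [key]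
    calc |(q - ht x t) * (w x t' + w x t) + ht x t * (w x t' - w x t)|
        ≤ |(q - ht x t) * (w x t' + w x t)| + |ht x t * (w x t' - w x t)| := abs_add_le _ _
      _ = |q - ht x t| * |w x t' + w x t| + |ht x t| * |w x t' - w x t| := by
          rw [abs_mul, abs_mul]
      _ ≤ ε' * (2 * M) + M * ε' := by
          apply add_le_add
          · apply mul_le_mul hqclose.le ((abs_add_le _ _).trans (by linarith)) (abs_nonneg _)
              hε'.le
          · exact mul_le_mul htb hwclose.le (abs_nonneg _) hM0.le
      _ = 3 * M * ε' := by ring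
  -- conclude
  rw [Real.dist_eq, step2]
  have hsub : (∫ x in (-a)..a, (t' - t)⁻¹ * ((h x t' - h x t) * (w x t' + w x t)))
      - (∫ x in (-a)..a, 2 * (w x t * ht x t))
      = ∫ x in (-a)..a, ((t' - t)⁻¹ * ((h x t' - h x t) * (w x t' + w x t))
          - 2 * (w x t * ht x t)) := by
    rw [intervalIntegral.integral_sub _ hintD]
    exact (((continuous_const.mul (((contx_of_contOn hh ht'Icc).sub
      (contx_of_contOn hh htm)).mul ((contx_of_contOn hw ht'Icc).add
      (contx_of_contOn hw htm)))).continuousOn).intervalIntegrable)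
  rw [hsub]
  have := intervalIntegral.norm_integral_le_of_norm_le_const (C := 3 * M * ε')
    (f := fun x => (t' - t)⁻¹ * ((h x t' - h x t) * (w x t' + w x t)) - 2 * (w x t * ht x t))
    (a := -a) (b := a)
    (fun x hxm => by
      rw [Real.norm_eq_abs]
      exact hbound x (Set.mem_Icc_of_Ioc (by rwa [Set.uIoc_of_le haa] at hxm)))
  rw [Real.norm_eq_abs] at this
  apply lt_of_le_of_lt this
  have habs : |a - -a| = 2 * a := by rw [abs_of_pos (by linarith)]; ring
  rw [habs]
  have hεc : ε' * (6 * a * M + 1) = ε := div_mul_cancel₀ ε (ne_of_gt h6)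
  nlinarith [hεc, hε', mul_pos ha hM0]


private lemma contOn_param {a T : ℝ} (ha : 0 < a) (F : ℝ → ℝ → ℝ)
    (hF : ContinuousOn (fun p : ℝ × ℝ => F p.1 p.2) (Set.univ ×ˢ Set.Icc 0 T)) :
    ContinuousOn (fun t => ∫ x in (-a)..a, F x t) (Set.Icc (0:ℝ) T) := by
  rw [Metric.continuousOn_iff]
  intro t htm ε hε
  set ε' := ε / (2 * a + 1) with hε'def
  have h2a : (0:ℝ) < 2 * a + 1 := by linarith
  have hε' : 0 < ε' := by positivity
  obtain ⟨δ, hδ, H⟩ := unifCont F hF ε' hε'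
  refine ⟨δ, hδ, fun s hs hd => ?_⟩
  rw [Real.dist_eq] at hd ⊢
  have hi : ∀ u ∈ Set.Icc (0:ℝ) T, IntervalIntegrable (fun x => F x u)
      MeasureTheory.volume (-a) a := fun u hu => (contx_of_contOn hF hu).intervalIntegrable _ _
  have hsub : (∫ x in (-a)..a, F x s) - (∫ x in (-a)..a, F x t)
      = ∫ x in (-a)..a, (F x s - F x t) :=
    (intervalIntegral.integral_sub (hi s hs) (hi t htm)).symm
  rw [hsub]
  have hb := intervalIntegral.norm_integral_le_of_norm_le_const (C := ε')
    (f := fun x => F x s - F x t) (a := -a) (b := a)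
    (fun x hxm => by
      rw [Real.norm_eq_abs]
      exact (H x (Set.mem_Icc_of_Ioc (by rwa [Set.uIoc_of_le (by linarith : -a ≤ a)] at hxm))
        s hs t htm hd).le)
  rw [Real.norm_eq_abs] at hb
  apply lt_of_le_of_lt hb
  have habs : |a - -a| = 2 * a := by rw [abs_of_pos (by linarith)]; ring
  rw [habs, hε'def, div_mul_eq_mul_div, div_lt_iff₀ h2a]
  nlinarith




/-- Integrated energy identity for regularized Model I: with
`𝓔(u) = (1/2)∫ (u_x² - u²) dx`,
`𝓔(h(·,T')) + S∫₀^{T'}∫ (|h|³+ε)(h_x+h_xxx)² = 𝓔(h(·,0)) - (1/2)∫₀^{T'}∫ h² h_xxx`. -/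
theorem modelI_integrated_energy_identity
    (a S ε T : ℝ) (ha : 0 < a) (hS : 0 < S) (hε : 0 < ε) (hT : 0 < T)
    (h hx hxx hxxx hxxxx ht : ℝ → ℝ → ℝ)
    (hsol : ClassicalSolutionI a S ε T h hx hxx hxxx hxxxx ht) :
    ∀ T' ∈ Set.Icc (0:ℝ) T,
      (1/2) * (∫ x in (-a)..a, ((hx x T')^2 - (h x T')^2))
        + S * ∫ t in (0:ℝ)..T', ∫ x in (-a)..a,
            (|h x t| ^ 3 + ε) * (hx x t + hxxx x t)^2
      = (1/2) * (∫ x in (-a)..a, ((hx x 0)^2 - (h x 0)^2))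
        - (1/2) * ∫ t in (0:ℝ)..T', ∫ x in (-a)..a, (h x t)^2 * hxxx x t := by
  intro T' hT'
  have haa : -a ≤ a := by linarith
  have hIcc : Set.uIcc (-a) a = Set.Icc (-a) a := Set.uIcc_of_le haa
  have h0T : (0:ℝ) ∈ Set.Icc (0:ℝ) T := ⟨le_rfl, hT.le⟩
  -- periodic point values
  have vh : ∀ t : ℝ, h a t = h (-a) t := fun t => by
    have := hsol.periodic_x (-a) t; rwa [show -a + 2 * a = a by ring] at this
  have per_hx : ∀ t ∈ Set.Icc (0:ℝ) T, ∀ x : ℝ, hx (x + 2 * a) t = hx x t := fun t htm =>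
    periodic_deriv (fun x => hsol.deriv_hx x t htm) (fun x => hsol.periodic_x x t)
  have per_hxx : ∀ t ∈ Set.Icc (0:ℝ) T, ∀ x : ℝ, hxx (x + 2 * a) t = hxx x t := fun t htm =>
    periodic_deriv (fun x => hsol.deriv_hxx x t htm) (per_hx t htm)
  have per_hxxx : ∀ t ∈ Set.Icc (0:ℝ) T, ∀ x : ℝ, hxxx (x + 2 * a) t = hxxx x t := fun t htm =>
    periodic_deriv (fun x => hsol.deriv_hxxx x t htm) (per_hxx t htm)
  have vhx : ∀ t ∈ Set.Icc (0:ℝ) T, hx a t = hx (-a) t := fun t htm => by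
    have := per_hx t htm (-a); rwa [show -a + 2 * a = a by ring] at this
  have vhxx : ∀ t ∈ Set.Icc (0:ℝ) T, hxx a t = hxx (-a) t := fun t htm => by
    have := per_hxx t htm (-a); rwa [show -a + 2 * a = a by ring] at this
  have vhxxx : ∀ t ∈ Set.Icc (0:ℝ) T, hxxx a t = hxxx (-a) t := fun t htm => by
    have := per_hxxx t htm (-a); rwa [show -a + 2 * a = a by ring] at this
  -- IBP: ∫ h(·,s) hxx(·,u) = -∫ hx(·,s) hx(·,u)
  have ibp1 : ∀ s ∈ Set.Icc (0:ℝ) T, ∀ u ∈ Set.Icc (0:ℝ) T,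
      (∫ x in (-a)..a, h x s * hxx x u) = -∫ x in (-a)..a, hx x s * hx x u := by
    intro s hs u hu
    have := intervalIntegral.integral_mul_deriv_eq_deriv_mul
      (u := fun y => h y s) (u' := fun y => hx y s)
      (v := fun y => hx y u) (v' := fun y => hxx y u)
      (fun x _ => hsol.deriv_hx x s hs) (fun x _ => hsol.deriv_hxx x u hu)
      ((contx_of_contOn hsol.cont_hx hs).intervalIntegrable (-a) a)
      ((contx_of_contOn hsol.cont_hxx hu).intervalIntegrable (-a) a)
    beta_reduce at this
    rw [this, vh s, vhx u hu]
    ring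
  -- symmetry for w = hxx
  have hsymG : ∀ s ∈ Set.Icc (0:ℝ) T, ∀ u ∈ Set.Icc (0:ℝ) T,
      (∫ x in (-a)..a, h x s * hxx x u) = ∫ x in (-a)..a, h x u * hxx x s := by
    intro s hs u hu
    rw [ibp1 s hs u hu, ibp1 u hu s hs]
    congr 1
    exact intervalIntegral.integral_congr (fun x _ => mul_comm _ _)
  -- the main t-functions
  set Ia : ℝ → ℝ := fun t => ∫ x in (-a)..a, (|h x t| ^ 3 + ε) * (hx x t + hxxx x t)^2
    with hIa
  set Ib : ℝ → ℝ := fun t => ∫ x in (-a)..a, (h x t)^2 * hxxx x t with hIb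
  set G : ℝ → ℝ := fun s => ∫ x in (-a)..a, h x s * hxx x s with hG
  set P : ℝ → ℝ := fun s => ∫ x in (-a)..a, h x s * h x s with hP
  set f : ℝ → ℝ := fun s => -(1/2) * (G s + P s) with hf
  -- claim 1
  have claim1 : ∀ t ∈ Set.Icc (0:ℝ) T,
      -(1/2) * ((∫ x in (-a)..a, 2 * (hxx x t * ht x t))
        + ∫ x in (-a)..a, 2 * (h x t * ht x t)) = -S * Ia t - (1/2) * Ib t := by
    intro t htm
    have ch := contx_of_contOn hsol.cont_h htm
    have chx := contx_of_contOn hsol.cont_hx htm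
    have chxx := contx_of_contOn hsol.cont_hxx htm
    have chxxx := contx_of_contOn hsol.cont_hxxx htm
    have cht := contx_of_contOn hsol.cont_ht htm
    -- A : combine the two integrals
    have hA : (∫ x in (-a)..a, 2 * (hxx x t * ht x t))
        + (∫ x in (-a)..a, 2 * (h x t * ht x t))
        = 2 * ∫ x in (-a)..a, (hxx x t + h x t) * ht x t := by
      rw [← intervalIntegral.integral_add (f := fun x => 2 * (hxx x t * ht x t))
        (g := fun x => 2 * (h x t * ht x t))
        ((continuous_const.mul (chxx.mul cht)).intervalIntegrable _ _)
        ((continuous_const.mul (ch.mul cht)).intervalIntegrable _ _),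
        ← intervalIntegral.integral_const_mul]
      exact intervalIntegral.integral_congr (fun x _ => by ring)
    -- B : substitute the PDE (a ring identity)
    have hB : (∫ x in (-a)..a, (hxx x t + h x t) * ht x t)
        = -(∫ x in (-a)..a, (hxx x t + h x t) * (h x t * hx x t))
          - ∫ x in (-a)..a, (hxx x t + h x t) * (-(ht x t) - h x t * hx x t) := by
      rw [← intervalIntegral.integral_neg, ← intervalIntegral.integral_sub
        (f := fun x => -((hxx x t + h x t) * (h x t * hx x t)))
        (g := fun x => (hxx x t + h x t) * (-(ht x t) - h x t * hx x t))
        (((chxx.add ch).mul (ch.mul chx)).neg.intervalIntegrable _ _)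
        (((chxx.add ch).mul (cht.neg.sub (ch.mul chx))).intervalIntegrable _ _)]
      exact intervalIntegral.integral_congr (fun x _ => by ring)
    -- C : flux integration by parts
    have hC : (∫ x in (-a)..a, (hxx x t + h x t) * (-(ht x t) - h x t * hx x t))
        = -(S * Ia t) := by
      have hibp := intervalIntegral.integral_mul_deriv_eq_deriv_mul
        (u := fun y => hxx y t + h y t) (u' := fun y => hxxx y t + hx y t)
        (v := fun y => S * ((|h y t| ^ 3 + ε) * (hx y t + hxxx y t)))
        (v' := fun y => -(ht y t) - h y t * hx y t)
        (fun x _ => (hsol.deriv_hxxx x t htm).add (hsol.deriv_hx x t htm))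
        (fun x _ => hsol.pde x t htm)
        ((chxxx.add chx).intervalIntegrable (-a) a)
        ((cht.neg.sub (ch.mul chx)).intervalIntegrable (-a) a)
      beta_reduce at hibp
      rw [hibp, vh t, vhx t htm, vhxx t htm, vhxxx t htm]
      have he : (∫ x in (-a)..a, (hxxx x t + hx x t)
            * (S * ((|h x t| ^ 3 + ε) * (hx x t + hxxx x t))))
          = S * Ia t := by
        show _ = S * ∫ x in (-a)..a, (|h x t| ^ 3 + ε) * (hx x t + hxxx x t)^2
        rw [← intervalIntegral.integral_const_mul]
        exact intervalIntegral.integral_congr (fun x _ => by ring)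
      rw [he]
      ring
    -- D : the transport term
    have hz : (∫ x in (-a)..a, (h x t)^2 * hx x t) = 0 := by
      have fd : ∀ x ∈ Set.uIcc (-a) a,
          HasDerivAt (fun y => (h y t)^3 / 3) ((h x t)^2 * hx x t) x := by
        intro x _
        have hd := ((hsol.deriv_hx x t htm).pow 3).div_const 3
        have he : ((3:ℕ):ℝ) * h x t ^ (3-1) * hx x t / 3 = (h x t)^2 * hx x t := by
          norm_num; ring
        rw [he] at hd
        exact hd
      rw [intervalIntegral.integral_eq_sub_of_hasDerivAt fd
        (((ch.pow 2).mul chx).intervalIntegrable _ _)]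
      rw [vh t]; ring
    have hIbJ : Ib t = -(2 * ∫ x in (-a)..a, h x t * hx x t * hxx x t) := by
      have hibp := intervalIntegral.integral_mul_deriv_eq_deriv_mul
        (u := fun y => h y t * h y t) (u' := fun y => hx y t * h y t + h y t * hx y t)
        (v := fun y => hxx y t) (v' := fun y => hxxx y t)
        (fun x _ => (hsol.deriv_hx x t htm).mul (hsol.deriv_hx x t htm))
        (fun x _ => hsol.deriv_hxxx x t htm)
        (((chx.mul ch).add (ch.mul chx)).intervalIntegrable (-a) a)
        (chxxx.intervalIntegrable (-a) a)
      have he1 : Ib t = ∫ x in (-a)..a, (h x t * h x t) * hxxx x t := by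
        show (∫ x in (-a)..a, (h x t)^2 * hxxx x t) = _
        exact intervalIntegral.integral_congr (fun x _ => by ring)
      have he2 : (∫ x in (-a)..a, (hx x t * h x t + h x t * hx x t) * hxx x t)
          = 2 * ∫ x in (-a)..a, h x t * hx x t * hxx x t := by
        rw [← intervalIntegral.integral_const_mul]
        exact intervalIntegral.integral_congr (fun x _ => by ring)
      beta_reduce at hibp
      rw [he1, hibp, vh t, vhxx t htm, he2]
      ring
    have hD : (∫ x in (-a)..a, (hxx x t + h x t) * (h x t * hx x t))
        = (∫ x in (-a)..a, h x t * hx x t * hxx x t)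
          + ∫ x in (-a)..a, (h x t)^2 * hx x t := by
      rw [← intervalIntegral.integral_add (f := fun x => h x t * hx x t * hxx x t)
        (g := fun x => (h x t)^2 * hx x t)
        (((ch.mul chx).mul chxx).intervalIntegrable _ _)
        (((ch.pow 2).mul chx).intervalIntegrable _ _)]
      exact intervalIntegral.integral_congr (fun x _ => by ring)
    rw [hA, hB, hC, hD, hz, hIbJ]
    ring
  -- claim 2 : the energy functional agrees with f on Icc 0 T
  have claim2 : ∀ t ∈ Set.Icc (0:ℝ) T,
      (1/2) * (∫ x in (-a)..a, ((hx x t)^2 - (h x t)^2)) = f t := by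
    intro t htm
    have ch := contx_of_contOn hsol.cont_h htm
    have chx := contx_of_contOn hsol.cont_hx htm
    have e1 : (∫ x in (-a)..a, ((hx x t)^2 - (h x t)^2))
        = (∫ x in (-a)..a, hx x t * hx x t) - ∫ x in (-a)..a, h x t * h x t := by
      rw [← intervalIntegral.integral_sub (f := fun x => hx x t * hx x t)
        (g := fun x => h x t * h x t) ((chx.mul chx).intervalIntegrable _ _)
        ((ch.mul ch).intervalIntegrable _ _)]
      exact intervalIntegral.integral_congr (fun x _ => by ring)
    show _ = -(1/2) * ((∫ x in (-a)..a, h x t * hxx x t) + ∫ x in (-a)..a, h x t * h x t)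
    have e2 : (∫ x in (-a)..a, hx x t * hx x t)
        = -(∫ x in (-a)..a, h x t * hxx x t) := by
      rw [ibp1 t htm t htm]; ring
    rw [e1, e2]
    ring
  -- derivative of f
  have hfd : ∀ t ∈ Set.Icc (0:ℝ) T,
      HasDerivWithinAt f (-S * Ia t - (1/2) * Ib t) (Set.Icc 0 T) t := by
    intro t htm
    have h1 := key_deriv ha hT h ht hxx hsol.cont_h hsol.cont_ht hsol.cont_hxx
      hsol.deriv_ht hsymG htm
    have h2 := key_deriv ha hT h ht h hsol.cont_h hsol.cont_ht hsol.cont_h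
      hsol.deriv_ht (fun s hs u hu => intervalIntegral.integral_congr
        (fun x _ => by ring)) htm
    have h3 := (h1.add h2).const_mul (-(1/2) : ℝ)
    rw [claim1 t htm] at h3
    exact h3
  -- continuity of Ia, Ib in t
  have cIa : ContinuousOn Ia (Set.Icc (0:ℝ) T) := by
    apply contOn_param ha
    have : ContinuousOn (fun p : ℝ × ℝ => (|h p.1 p.2| ^ 3 + ε)
        * (hx p.1 p.2 + hxxx p.1 p.2)^2) (Set.univ ×ˢ Set.Icc 0 T) :=
      (((hsol.cont_h.abs.pow 3).add continuousOn_const).mul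
        ((hsol.cont_hx.add hsol.cont_hxxx).pow 2))
    exact this
  have cIb : ContinuousOn Ib (Set.Icc (0:ℝ) T) := by
    apply contOn_param ha
    exact (hsol.cont_h.pow 2).mul hsol.cont_hxxx
  -- FTC on [0, T']
  have h0T' : (0:ℝ) ≤ T' := hT'.1
  have hT'T : T' ≤ T := hT'.2
  have hsubIcc : Set.Icc (0:ℝ) T' ⊆ Set.Icc (0:ℝ) T := Set.Icc_subset_Icc le_rfl hT'T
  have cD : ContinuousOn (fun t => -S * Ia t - (1/2) * Ib t) (Set.Icc (0:ℝ) T) :=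
    (continuousOn_const.mul cIa).sub (continuousOn_const.mul cIb)
  have ftc := intervalIntegral.integral_eq_sub_of_hasDeriv_right_of_le h0T'
    (f := f) (f' := fun t => -S * Ia t - (1/2) * Ib t)
    (fun t htm => ((hfd t (hsubIcc htm)).continuousWithinAt).mono hsubIcc)
    (fun t htm => (((hfd t (hsubIcc (Set.mem_Icc_of_Ioo htm))).hasDerivAt
      (Icc_mem_nhds htm.1 (lt_of_lt_of_le htm.2 hT'T))).hasDerivWithinAt))
    ((cD.mono (by rw [Set.uIcc_of_le h0T']; exact hsubIcc)).intervalIntegrable)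
  -- split the t-integral
  have IIa : IntervalIntegrable Ia MeasureTheory.volume 0 T' :=
    (cIa.mono (by rw [Set.uIcc_of_le h0T']; exact hsubIcc)).intervalIntegrable
  have IIb : IntervalIntegrable Ib MeasureTheory.volume 0 T' :=
    (cIb.mono (by rw [Set.uIcc_of_le h0T']; exact hsubIcc)).intervalIntegrable
  have hsplit : (∫ t in (0:ℝ)..T', (-S * Ia t - (1/2) * Ib t))
      = -S * (∫ t in (0:ℝ)..T', Ia t) - (1/2) * ∫ t in (0:ℝ)..T', Ib t := by
    rw [intervalIntegral.integral_sub (IIa.const_mul _) (IIb.const_mul _),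
      intervalIntegral.integral_const_mul, intervalIntegral.integral_const_mul]
  rw [hsplit] at ftc
  have e0 := claim2 0 h0T
  have eT' := claim2 T' hT'
  rw [← eT', ← e0] at ftc
  simp only [hIa, hIb] at ftc
  linarith [ftc]
end

section
/- Let h be a classical periodic solution of the regularized Model I equation on [0,T]. Suppose K₃ > 0 is such that |h(x₁,t) − h(x₂,t)| ≤ K₃·|x₁ − x₂|^{1/2} for all x₁, x₂ ∈ [−a,a] and t ∈ [0,T], and let F = ( ∫_0^T ∫_{−a}^{a} ( h²/2 + S·(|h|³ + ε)(h_x + h_xxx) )² dx dt )^{1/2} < ∞. Then there exists a constant M̄ > 0 depending only on K₃ and F such that for every x₀ ∈ (−a,a) and every 0 ≤ t₁ < t₂ ≤ T for which the interval [ x₀ − (M̄²/(16K₃²))·(t₂ − t₁)^{1/4}, x₀ + (M̄²/(16K₃²))·(t₂ − t₁)^{1/4} ] is contained in (−a,a), one has |h(x₀,t₁) − h(x₀,t₂)| ≤ M̄·(t₂ − t₁)^{1/8}. -/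
open MeasureTheory intervalIntegral Set

set_option maxHeartbeats 2000000


lemma fubini_cont (Θ : ℝ → ℝ → ℝ) (hΘ : Continuous (fun p : ℝ × ℝ => Θ p.1 p.2))
    (a b c d : ℝ) (hab : a ≤ b) (hcd : c ≤ d) :
    ∫ x in a..b, ∫ y in c..d, Θ x y = ∫ y in c..d, ∫ x in a..b, Θ x y := by
  have hint : Integrable (Function.uncurry Θ)
      ((volume.restrict (Set.Ioc a b)).prod (volume.restrict (Set.Ioc c d))) := by
    rw [Measure.prod_restrict]
    have : IntegrableOn (Function.uncurry Θ) (Set.Icc a b ×ˢ Set.Icc c d)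
        (volume.prod volume) := by
      rw [← Measure.volume_eq_prod]
      exact hΘ.continuousOn.integrableOn_compact (isCompact_Icc.prod isCompact_Icc)
    exact this.mono_set (Set.prod_mono Set.Ioc_subset_Icc_self Set.Ioc_subset_Icc_self)
  rw [intervalIntegral.integral_of_le hab, intervalIntegral.integral_of_le hcd]
  simp_rw [intervalIntegral.integral_of_le hab, intervalIntegral.integral_of_le hcd]
  exact integral_integral_swap hint

lemma cont_param (Θ : ℝ → ℝ → ℝ) (hΘ : Continuous (fun p : ℝ × ℝ => Θ p.1 p.2))
    (c d : ℝ) : Continuous fun x => ∫ y in c..d, Θ x y :=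
  intervalIntegral.continuous_parametric_intervalIntegral_of_continuous' (f := Θ) hΘ c d



/-- Hölder continuity in time for regularized Model I: from the uniform `1/2`-Hölder
bound in `x` with constant `K₃` and the `L²(Q_T)` norm `F` of the flux, one gets a
`1/8`-Hölder bound in time with constant depending only on `K₃` and `F`. -/
theorem modelI_time_holder
    (K₃ F : ℝ) (hK₃ : 0 < K₃) :
    ∃ Mbar : ℝ, 0 < Mbar ∧
      ∀ a S ε T : ℝ, 0 < a → 0 < S → 0 < ε → 0 < T →
      ∀ h hx hxx hxxx hxxxx ht : ℝ → ℝ → ℝ,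
        ClassicalSolutionI a S ε T h hx hxx hxxx hxxxx ht →
        (∀ x₁ ∈ Set.Icc (-a) a, ∀ x₂ ∈ Set.Icc (-a) a, ∀ t ∈ Set.Icc (0:ℝ) T,
            |h x₁ t - h x₂ t| ≤ K₃ * |x₁ - x₂| ^ ((1:ℝ)/2)) →
        Real.sqrt (∫ t in (0:ℝ)..T, ∫ x in (-a)..a,
            ((h x t)^2 / 2 + S * (|h x t| ^ 3 + ε) * (hx x t + hxxx x t))^2) = F →
        ∀ x₀ ∈ Set.Ioo (-a) a, ∀ t₁ t₂ : ℝ, 0 ≤ t₁ → t₁ < t₂ → t₂ ≤ T →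
          Set.Icc (x₀ - (Mbar^2 / (16 * K₃^2)) * (t₂ - t₁) ^ ((1:ℝ)/4))
                  (x₀ + (Mbar^2 / (16 * K₃^2)) * (t₂ - t₁) ^ ((1:ℝ)/4))
            ⊆ Set.Ioo (-a) a →
          |h x₀ t₁ - h x₀ t₂| ≤ Mbar * (t₂ - t₁) ^ ((1:ℝ)/8) := by
  have hMb_pos : (0:ℝ) < (512 * K₃^3 * (|F|+1)) ^ ((1:ℝ)/4) :=
    Real.rpow_pos_of_pos (by positivity) _
  refine ⟨(512 * K₃^3 * (|F|+1)) ^ ((1:ℝ)/4), hMb_pos, ?_⟩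
  set Mbar := (512 * K₃^3 * (|F|+1)) ^ ((1:ℝ)/4) with hMbar_def
  intro a S ε T ha hS hε hT h hx hxx hxxx hxxxx ht sol Hold hFdef x₀ hx₀ t₁ t₂ ht₁ ht12 ht₂ hsub
  have hT0 : (0:ℝ) ≤ T := le_trans (le_trans ht₁ ht12.le) ht₂
  have ht₁m : t₁ ∈ Set.Icc (0:ℝ) T := ⟨ht₁, le_trans ht12.le ht₂⟩
  have ht₂m : t₂ ∈ Set.Icc (0:ℝ) T := ⟨le_trans ht₁ ht12.le, ht₂⟩
  have hF0 : 0 ≤ F := hFdef ▸ Real.sqrt_nonneg _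
  have hMbar4 : Mbar^4 = 512*K₃^3*(F+1) := by
    rw [hMbar_def, ← Real.rpow_natCast _ 4, ← Real.rpow_mul (by positivity)]
    norm_num [abs_of_nonneg hF0]
  set τ := t₂ - t₁ with hτdef
  have hτ : 0 < τ := by simp [hτdef]; linarith
  set u := τ ^ ((1:ℝ)/8) with hudef
  have hu : 0 < u := Real.rpow_pos_of_pos hτ _
  have hτ4 : τ ^ ((1:ℝ)/4) = u^2 := by
    rw [hudef, ← Real.rpow_natCast _ 2, ← Real.rpow_mul hτ.le]; norm_num
  have hτ8 : τ = u^8 := by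
    rw [hudef, ← Real.rpow_natCast _ 8, ← Real.rpow_mul hτ.le]; norm_num
  set A := Mbar * u with hAdef
  have hA : 0 < A := mul_pos hMb_pos hu
  set r := Mbar^2/(16*K₃^2) * u^2 with hrdef
  have hr : 0 < r := by positivity
  rw [hτ4] at hsub
  have hmem_minus : x₀ - r ∈ Set.Ioo (-a) a := hsub ⟨le_rfl, by linarith⟩
  have hmem_plus : x₀ + r ∈ Set.Ioo (-a) a := hsub ⟨by linarith, le_rfl⟩
  -- clamping function
  set c : ℝ → ℝ := fun t => max 0 (min t T) with hcdef
  have hc_cont : Continuous c := continuous_const.max (continuous_id.min continuous_const)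
  have hc_mem : ∀ t, c t ∈ Set.Icc (0:ℝ) T :=
    fun t => ⟨le_max_left _ _, max_le hT0 (min_le_right _ _)⟩
  have hc_eq : ∀ t ∈ Set.Icc (0:ℝ) T, c t = t := by
    intro t htm
    simp only [hcdef, min_eq_left htm.2, max_eq_right htm.1]
  have mkC : ∀ G : ℝ → ℝ → ℝ,
      ContinuousOn (fun p : ℝ × ℝ => G p.1 p.2) (Set.univ ×ˢ Set.Icc 0 T) →
      Continuous (fun p : ℝ × ℝ => G p.1 (c p.2)) := by
    intro G hG
    have hmap : Continuous fun p : ℝ × ℝ => ((p.1, c p.2) : ℝ × ℝ) :=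
      continuous_fst.prodMk (hc_cont.comp continuous_snd)
    exact hG.comp_continuous hmap (fun p => ⟨Set.mem_univ _, hc_mem _⟩)
  have hH : Continuous (fun p : ℝ × ℝ => h p.1 (c p.2)) := mkC h sol.cont_h
  have hHx : Continuous (fun p : ℝ × ℝ => hx p.1 (c p.2)) := mkC hx sol.cont_hx
  have hHxxx : Continuous (fun p : ℝ × ℝ => hxxx p.1 (c p.2)) := mkC hxxx sol.cont_hxxx
  have hHt : Continuous (fun p : ℝ × ℝ => ht p.1 (c p.2)) := mkC ht sol.cont_ht
  -- flux
  set fl : ℝ → ℝ → ℝ :=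
    fun x t => (h x t)^2 / 2 + S * (|h x t| ^ 3 + ε) * (hx x t + hxxx x t) with hfldef
  set flC : ℝ → ℝ → ℝ := fun x t => fl x (c t) with hflCdef
  have contflC : Continuous (fun p : ℝ × ℝ => flC p.1 p.2) := by
    apply Continuous.add
    · exact (hH.pow 2).div_const 2
    · exact (continuous_const.mul (((hH.abs.pow 3).add continuous_const))).mul (hHx.add hHxxx)
  have flC_eq : ∀ x : ℝ, ∀ t ∈ Set.Icc (0:ℝ) T, flC x t = fl x t := by
    intro x t htm; simp only [hflCdef, hc_eq t htm]
  -- per-time continuity in x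
  have cont_ht_x : ∀ t ∈ Set.Icc (0:ℝ) T, Continuous (fun x => ht x t) := by
    intro t htm
    have := hHt.comp (continuous_id.prodMk (continuous_const : Continuous fun _ : ℝ => t))
    simpa [Function.comp_def, hc_eq t htm] using this
  -- flux spatial derivative
  have dfl : ∀ t ∈ Set.Icc (0:ℝ) T, ∀ x : ℝ,
      HasDerivAt (fun y => fl y t) (-(ht x t)) x := by
    intro t htm x
    have d1 : HasDerivAt (fun y => (h y t)^2/2) (h x t * hx x t) x := by
      have := ((sol.deriv_hx x t htm).pow 2).div_const 2
      exact this.congr_deriv (by rw [show (2:ℕ) - 1 = 1 from rfl]; push_cast; ring)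
    have d2 := d1.add (sol.pde x t htm)
    have heq : (fun y => (h y t)^2/2 + S * ((|h y t|^3+ε)*(hx y t+hxxx y t)))
        = fun y => fl y t := by funext y; simp only [hfldef]; ring
    simp only [Pi.add_def] at d2; rw [heq] at d2
    exact d2.congr_deriv (by ring)
  -- FTC in x
  have ftcx : ∀ t ∈ Set.Icc (0:ℝ) T, ∀ p q : ℝ,
      ∫ x in p..q, ht x t = fl p t - fl q t := by
    intro t htm p q
    have hInt : IntervalIntegrable (fun x => -(ht x t)) volume p q :=
      ((cont_ht_x t htm).neg).intervalIntegrable p q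
    have := intervalIntegral.integral_eq_sub_of_hasDerivAt
      (f := fun y => fl y t) (f' := fun y => -(ht y t))
      (fun y _ => dfl t htm y) hInt
    have h2 : ∫ x in p..q, -(ht x t) = -(∫ x in p..q, ht x t) := by
      simpa using intervalIntegral.integral_neg (f := fun x => ht x t) (a := p) (b := q)
    rw [h2] at this
    linarith
  -- FTC in t
  have ftct : ∀ x : ℝ, h x t₂ - h x t₁ = ∫ t in t₁..t₂, ht x t := by
    intro x
    have contx : Continuous fun s => h x (c s) :=
      hH.comp (continuous_const.prodMk continuous_id)
    have cont1 : ContinuousOn (fun s => h x s) (Set.Icc t₁ t₂) := by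
      apply contx.continuousOn.congr
      intro s hs
      show h x s = h x (c s)
      rw [hc_eq s ⟨by linarith [hs.1], by linarith [hs.2]⟩]
    have contht : Continuous fun s => ht x (c s) :=
      hHt.comp (continuous_const.prodMk continuous_id)
    have hint : IntervalIntegrable (fun t => ht x t) volume t₁ t₂ := by
      apply ContinuousOn.intervalIntegrable
      apply contht.continuousOn.congr
      intro s hs
      rw [Set.uIcc_of_le ht12.le] at hs
      show ht x s = ht x (c s)
      rw [hc_eq s ⟨by linarith [hs.1], by linarith [hs.2]⟩]
    exact (intervalIntegral.integral_eq_sub_of_hasDerivAt_of_le ht12.le cont1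
      (fun t htt => (sol.deriv_ht x t ⟨by linarith [htt.1], by linarith [htt.2]⟩).hasDerivAt
        (Icc_mem_nhds (by linarith [htt.1]) (by linarith [htt.2]))) hint).symm
  -- continuity of h(·,t) for valid t
  have conth_t : ∀ t ∈ Set.Icc (0:ℝ) T, Continuous fun x => h x t := by
    intro t htm
    have := hH.comp (continuous_id.prodMk (continuous_const : Continuous fun _ : ℝ => t))
    simpa [Function.comp_def, hc_eq t htm] using this
  set g : ℝ → ℝ := fun x => h x t₁ - h x t₂ with hgdef
  have contg : Continuous g := (conth_t t₁ ht₁m).sub (conth_t t₂ ht₂m)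
  set htC : ℝ → ℝ → ℝ := fun x t => ht x (c t) with hhtCdef
  -- key1
  have key1 : ∀ ρ : ℝ, 0 ≤ ρ →
      ∫ x in (x₀-ρ)..(x₀+ρ), g x
        = ∫ t in t₁..t₂, (flC (x₀+ρ) t - flC (x₀-ρ) t) := by
    intro ρ hρ
    have step1 : ∀ x : ℝ, g x = ∫ t in t₁..t₂, -(htC x t) := by
      intro x
      have e0 : g x = -(h x t₂ - h x t₁) := by simp only [hgdef]; ring
      rw [e0, ftct x, ← intervalIntegral.integral_neg]
      apply intervalIntegral.integral_congr
      intro s hs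
      rw [Set.uIcc_of_le ht12.le] at hs
      show -(ht x s) = -(htC x s)
      simp only [hhtCdef, hc_eq s ⟨by linarith [hs.1], by linarith [hs.2]⟩]
    have contneg : Continuous (fun p : ℝ × ℝ => -(htC p.1 p.2)) := hHt.neg
    calc ∫ x in (x₀-ρ)..(x₀+ρ), g x
        = ∫ x in (x₀-ρ)..(x₀+ρ), ∫ t in t₁..t₂, -(htC x t) := by
          apply intervalIntegral.integral_congr; intro x _; exact step1 x
      _ = ∫ t in t₁..t₂, ∫ x in (x₀-ρ)..(x₀+ρ), -(htC x t) := by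
          exact fubini_cont _ contneg _ _ _ _ (by linarith) ht12.le
      _ = ∫ t in t₁..t₂, (flC (x₀+ρ) t - flC (x₀-ρ) t) := by
          apply intervalIntegral.integral_congr
          intro t hs
          rw [Set.uIcc_of_le ht12.le] at hs
          have htm : t ∈ Set.Icc (0:ℝ) T := ⟨by linarith [hs.1], by linarith [hs.2]⟩
          show (∫ x in (x₀-ρ)..(x₀+ρ), -(htC x t)) = flC (x₀+ρ) t - flC (x₀-ρ) t
          have e1 : ∫ x in (x₀-ρ)..(x₀+ρ), -(htC x t) = ∫ x in (x₀-ρ)..(x₀+ρ), -(ht x t) := by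
            apply intervalIntegral.integral_congr
            intro x _
            show -(htC x t) = -(ht x t)
            simp only [hhtCdef, hc_eq t htm]
          rw [e1]
          have e2 : ∫ x in (x₀-ρ)..(x₀+ρ), -(ht x t)
              = -(∫ x in (x₀-ρ)..(x₀+ρ), ht x t) := by
            simpa using intervalIntegral.integral_neg (f := fun x => ht x t)
          rw [e2, ftcx t htm, flC_eq _ t htm, flC_eq _ t htm]
          ring
  -- Hölder oscillation bound
  have hIccsub : Set.Icc (x₀ - r) (x₀ + r) ⊆ Set.Icc (-a) a :=
    fun y hy => Set.Ioo_subset_Icc_self (hsub hy)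
  have hrhalf : r ^ ((1:ℝ)/2) = Mbar*u/(4*K₃) := by
    have hq : (0:ℝ) ≤ Mbar*u/(4*K₃) := by positivity
    have e : r = (Mbar*u/(4*K₃))^(2:ℕ) := by
      rw [hrdef]; field_simp; ring
    rw [e, ← Real.rpow_natCast _ 2, ← Real.rpow_mul hq]
    norm_num
  have gosc : ∀ x ∈ Set.Icc (x₀ - r) (x₀ + r), |g x - g x₀| ≤ A/2 := by
    intro x hxm
    have hxa : x ∈ Set.Icc (-a) a := hIccsub hxm
    have hx₀a : x₀ ∈ Set.Icc (-a) a := Set.Ioo_subset_Icc_self hx₀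
    have h1 := Hold x hxa x₀ hx₀a t₁ ht₁m
    have h2 := Hold x hxa x₀ hx₀a t₂ ht₂m
    have hxr : |x - x₀| ≤ r := by
      rw [abs_le]; exact ⟨by linarith [hxm.1], by linarith [hxm.2]⟩
    have hpow : |x - x₀| ^ ((1:ℝ)/2) ≤ r ^ ((1:ℝ)/2) :=
      Real.rpow_le_rpow (abs_nonneg _) hxr (by norm_num)
    have tri : |g x - g x₀| ≤ |h x t₁ - h x₀ t₁| + |h x t₂ - h x₀ t₂| := by
      have e0 : g x - g x₀ = (h x t₁ - h x₀ t₁) - (h x t₂ - h x₀ t₂) := by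
        simp only [hgdef]; ring
      rw [e0]; exact abs_sub _ _
    have e1 : K₃ * |x - x₀| ^ ((1:ℝ)/2) ≤ A/4 := by
      have := mul_le_mul_of_nonneg_left hpow hK₃.le
      rw [hrhalf] at this
      have e2 : K₃ * (Mbar*u/(4*K₃)) = A/4 := by
        rw [hAdef]; field_simp
      linarith
    linarith
  -- contradiction setup
  by_contra hcon
  push_neg at hcon
  have hcon' : A < |g x₀| := hcon
  -- key2
  have contflC_t : ∀ y : ℝ, Continuous fun t => flC y t :=
    fun y => contflC.comp ((continuous_const : Continuous fun _ : ℝ => y).prodMk continuous_id)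
  have key2 : ∀ ρ ∈ Set.Icc (0:ℝ) r,
      ρ * A ≤ ∫ t in t₁..t₂, (|flC (x₀+ρ) t| + |flC (x₀-ρ) t|) := by
    intro ρ hρm
    obtain ⟨hρ0, hρr⟩ := hρm
    have hsub2 : Set.Icc (x₀-ρ) (x₀+ρ) ⊆ Set.Icc (x₀-r) (x₀+r) :=
      Set.Icc_subset_Icc (by linarith) (by linarith)
    have habs : ρ * A ≤ |∫ x in (x₀-ρ)..(x₀+ρ), g x| := by
      rcases lt_abs.mp hcon' with hpos | hneg
      · have lower : ∀ x ∈ Set.Icc (x₀-ρ) (x₀+ρ), A/2 ≤ g x := by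
          intro x hxm
          have hb := abs_le.mp (gosc x (hsub2 hxm))
          have hpos' : A < h x₀ t₁ - h x₀ t₂ := hpos
          show A/2 ≤ h x t₁ - h x t₂
          linarith [hb.1, hpos']
        have hmono := intervalIntegral.integral_mono_on (μ := volume) (by linarith : x₀-ρ ≤ x₀+ρ)
          (intervalIntegrable_const) (contg.intervalIntegrable _ _) lower
        rw [intervalIntegral.integral_const] at hmono
        have e0 : (x₀+ρ - (x₀-ρ)) • (A/2) = ρ * A := by
          rw [smul_eq_mul]; ring
        rw [e0] at hmono
        exact hmono.trans (le_abs_self _)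
      · have upper : ∀ x ∈ Set.Icc (x₀-ρ) (x₀+ρ), g x ≤ -(A/2) := by
          intro x hxm
          have hb := abs_le.mp (gosc x (hsub2 hxm))
          have hneg' : A < -(h x₀ t₁ - h x₀ t₂) := hneg
          show h x t₁ - h x t₂ ≤ -(A/2)
          linarith [hb.2, hneg']
        have hmono := intervalIntegral.integral_mono_on (μ := volume) (by linarith : x₀-ρ ≤ x₀+ρ)
          (contg.intervalIntegrable _ _) (intervalIntegrable_const) upper
        rw [intervalIntegral.integral_const] at hmono
        have e0 : (x₀+ρ - (x₀-ρ)) • (-(A/2)) = -(ρ * A) := by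
          rw [smul_eq_mul]; ring
        rw [e0] at hmono
        have : ρ * A ≤ -(∫ x in (x₀-ρ)..(x₀+ρ), g x) := by linarith
        exact this.trans (neg_le_abs _)
    have hΨΦ : |∫ x in (x₀-ρ)..(x₀+ρ), g x|
        ≤ ∫ t in t₁..t₂, (|flC (x₀+ρ) t| + |flC (x₀-ρ) t|) := by
      rw [key1 ρ hρ0]
      have h1 := intervalIntegral.abs_integral_le_integral_abs (μ := volume)
        (f := fun t => flC (x₀+ρ) t - flC (x₀-ρ) t) (a := t₁) (b := t₂) ht12.le
      refine h1.trans (intervalIntegral.integral_mono_on ht12.le ?_ ?_ ?_)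
      · exact (((contflC_t _).sub (contflC_t _)).abs).intervalIntegrable _ _
      · exact (((contflC_t _).abs).add ((contflC_t _).abs)).intervalIntegrable _ _
      · intro t _; exact abs_sub _ _
    exact habs.trans hΨΦ
  -- continuity of the (ρ,t) ↦ |flC(x₀+ρ,t)|+|flC(x₀-ρ,t)| integrand
  have contΘ : Continuous (fun p : ℝ × ℝ => |flC (x₀ + p.1) p.2| + |flC (x₀ - p.1) p.2|) := by
    have c1 : Continuous fun p : ℝ × ℝ => flC (x₀ + p.1) p.2 :=
      contflC.comp ((continuous_const.add continuous_fst).prodMk continuous_snd)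
    have c2 : Continuous fun p : ℝ × ℝ => flC (x₀ - p.1) p.2 :=
      contflC.comp ((continuous_const.sub continuous_fst).prodMk continuous_snd)
    exact c1.abs.add c2.abs
  have contΦ : Continuous fun ρ => ∫ t in t₁..t₂, (|flC (x₀+ρ) t| + |flC (x₀-ρ) t|) :=
    cont_param _ contΘ t₁ t₂
  have key3 : A * r^2/2 ≤ ∫ ρ in (0:ℝ)..r, ∫ t in t₁..t₂, (|flC (x₀+ρ) t| + |flC (x₀-ρ) t|) := by
    have hcont0 : Continuous (fun ρ : ℝ => ρ * A) := continuous_id.mul continuous_const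
    have hmono := intervalIntegral.integral_mono_on (μ := volume) hr.le
      (hcont0.intervalIntegrable _ _)
      (contΦ.intervalIntegrable _ _) key2
    have e0 : ∫ ρ in (0:ℝ)..r, ρ * A = A * r^2/2 := by
      rw [intervalIntegral.integral_mul_const, integral_id]; ring
    rw [e0] at hmono
    exact hmono
  have contflC_x : ∀ t : ℝ, Continuous fun x => flC x t :=
    fun t => contflC.comp (continuous_id.prodMk continuous_const)
  have key4 : (∫ ρ in (0:ℝ)..r, ∫ t in t₁..t₂, (|flC (x₀+ρ) t| + |flC (x₀-ρ) t|))
      = ∫ t in t₁..t₂, ∫ x in (x₀-r)..(x₀+r), |flC x t| := by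
    rw [fubini_cont _ contΘ 0 r t₁ t₂ hr.le ht12.le]
    apply intervalIntegral.integral_congr
    intro t _
    show (∫ ρ in (0:ℝ)..r, (|flC (x₀+ρ) t| + |flC (x₀-ρ) t|))
        = ∫ x in (x₀-r)..(x₀+r), |flC x t|
    have i1 : IntervalIntegrable (fun ρ => |flC (x₀+ρ) t|) volume 0 r :=
      (((contflC_x t).comp (continuous_const.add continuous_id)).abs).intervalIntegrable _ _
    have i2 : IntervalIntegrable (fun ρ => |flC (x₀-ρ) t|) volume 0 r :=
      (((contflC_x t).comp (continuous_const.sub continuous_id)).abs).intervalIntegrable _ _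
    rw [intervalIntegral.integral_add i1 i2]
    have e1 : ∫ ρ in (0:ℝ)..r, |flC (x₀+ρ) t| = ∫ x in x₀..(x₀+r), |flC x t| := by
      have := intervalIntegral.integral_comp_add_left (a := 0) (b := r)
        (fun x => |flC x t|) x₀
      simpa using this
    have e2 : ∫ ρ in (0:ℝ)..r, |flC (x₀-ρ) t| = ∫ x in (x₀-r)..x₀, |flC x t| := by
      have := intervalIntegral.integral_comp_sub_left (a := 0) (b := r)
        (fun x => |flC x t|) x₀
      simpa using this
    rw [e1, e2, add_comm]
    exact intervalIntegral.integral_add_adjacent_intervals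
      (((contflC_x t).abs).intervalIntegrable _ _) (((contflC_x t).abs).intervalIntegrable _ _)
  -- AM-GM / Cauchy-Schwarz step
  set lam := Real.sqrt (2*r*τ) / (F+1) with hlamdef
  have h2rτ : (0:ℝ) < 2*r*τ := by positivity
  have hsq_pos : 0 < Real.sqrt (2*r*τ) := Real.sqrt_pos.mpr h2rτ
  have hF1 : (0:ℝ) < F + 1 := by linarith
  have hlam : 0 < lam := div_pos hsq_pos hF1
  have pw : ∀ y : ℝ, |y| ≤ (lam * y^2 + 1/lam)/2 := by
    intro y
    have hstep : 2*lam*|y| ≤ lam^2*y^2 + 1 := by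
      nlinarith only [sq_nonneg (lam*|y| - 1), sq_abs y]
    rw [← mul_le_mul_iff_right₀ (by positivity : (0:ℝ) < 2*lam)]
    calc 2*lam*|y| ≤ lam^2*y^2+1 := hstep
      _ = 2*lam*((lam*y^2+1/lam)/2) := by field_simp
  have contAbs : ∀ t : ℝ, Continuous fun x => |flC x t| := fun t => (contflC_x t).abs
  have contQuad : ∀ t : ℝ, Continuous fun x => (lam * (flC x t)^2 + 1/lam)/2 :=
    fun t => ((continuous_const.mul ((contflC_x t).pow 2)).add continuous_const).div_const 2
  set N := ∫ t in t₁..t₂, ∫ x in (x₀-r)..(x₀+r), (flC x t)^2 with hNdef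
  have hxr_le : x₀ - r ≤ x₀ + r := by linarith
  have cont_t_abs : Continuous fun t => ∫ x in (x₀-r)..(x₀+r), |flC x t| := by
    apply cont_param (Θ := fun t x => |flC x t|)
    exact (contflC.comp continuous_swap).abs
  have cont_t_sq : Continuous fun t => ∫ x in (x₀-r)..(x₀+r), (flC x t)^2 := by
    apply cont_param (Θ := fun t x => (flC x t)^2)
    exact (contflC.comp continuous_swap).pow 2
  have cont_t_sqa : Continuous fun t => ∫ x in (-a)..a, (flC x t)^2 := by
    apply cont_param (Θ := fun t x => (flC x t)^2)
    exact (contflC.comp continuous_swap).pow 2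
  have keyCS : (∫ t in t₁..t₂, ∫ x in (x₀-r)..(x₀+r), |flC x t|)
      ≤ (lam * N + (1/lam) * (2*r) * τ)/2 := by
    have step1 : (∫ t in t₁..t₂, ∫ x in (x₀-r)..(x₀+r), |flC x t|)
        ≤ ∫ t in t₁..t₂, (lam * (∫ x in (x₀-r)..(x₀+r), (flC x t)^2) + (1/lam)*(2*r))/2 := by
      apply intervalIntegral.integral_mono_on (μ := volume)
        (g := fun t => (lam * (∫ x in (x₀-r)..(x₀+r), (flC x t)^2) + (1/lam)*(2*r))/2) ht12.le
        (cont_t_abs.intervalIntegrable _ _)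
        ((((continuous_const.mul cont_t_sq).add continuous_const).div_const 2).intervalIntegrable _ _)
      intro t _
      have inner : (∫ x in (x₀-r)..(x₀+r), |flC x t|)
          ≤ ∫ x in (x₀-r)..(x₀+r), (lam * (flC x t)^2 + 1/lam)/2 :=
        intervalIntegral.integral_mono_on (μ := volume) hxr_le
          ((contAbs t).intervalIntegrable _ _) ((contQuad t).intervalIntegrable _ _)
          (fun x _ => pw _)
      have innerval : (∫ x in (x₀-r)..(x₀+r), (lam * (flC x t)^2 + 1/lam)/2)
          = (lam * (∫ x in (x₀-r)..(x₀+r), (flC x t)^2) + (1/lam)*(2*r))/2 := by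
        rw [intervalIntegral.integral_div]
        rw [intervalIntegral.integral_add (f := fun x => lam * (flC x t)^2)
          ((continuous_const.mul ((contflC_x t).pow 2)).intervalIntegrable _ _)
          (intervalIntegrable_const (μ := volume))]
        rw [intervalIntegral.integral_const_mul, intervalIntegral.integral_const, smul_eq_mul]
        ring
      linarith [inner, innerval]
    have step2 : (∫ t in t₁..t₂,
          (lam * (∫ x in (x₀-r)..(x₀+r), (flC x t)^2) + (1/lam)*(2*r))/2)
        = (lam * N + (1/lam)*(2*r)*τ)/2 := by
      rw [intervalIntegral.integral_div]
      rw [intervalIntegral.integral_add (f := fun t => lam * ∫ x in (x₀-r)..(x₀+r), (flC x t)^2)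
        ((continuous_const.mul cont_t_sq).intervalIntegrable _ _)
        (intervalIntegrable_const (μ := volume))]
      rw [intervalIntegral.integral_const_mul, intervalIntegral.integral_const, smul_eq_mul,
        ← hNdef, ← hτdef]
      ring
    linarith [step1, step2]
  -- N is bounded by F²
  have hinner_nonneg : ∀ t : ℝ, (0:ℝ) ≤ ∫ x in (-a)..a, (flC x t)^2 :=
    fun t => intervalIntegral.integral_nonneg (by linarith) (fun x _ => sq_nonneg _)
  have hNsub : ∀ t : ℝ,
      (∫ x in (x₀-r)..(x₀+r), (flC x t)^2) ≤ ∫ x in (-a)..a, (flC x t)^2 := by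
    intro t
    have i1 : IntervalIntegrable (fun x => (flC x t)^2) volume (-a) (x₀-r) :=
      (((contflC_x t).pow 2)).intervalIntegrable _ _
    have i2 : IntervalIntegrable (fun x => (flC x t)^2) volume (x₀-r) (x₀+r) :=
      (((contflC_x t).pow 2)).intervalIntegrable _ _
    have i3 : IntervalIntegrable (fun x => (flC x t)^2) volume (x₀+r) a :=
      (((contflC_x t).pow 2)).intervalIntegrable _ _
    have e1 := intervalIntegral.integral_add_adjacent_intervals i1 i2
    have e2 := intervalIntegral.integral_add_adjacent_intervals (i1.trans i2) i3
    have n1 : (0:ℝ) ≤ ∫ x in (-a)..(x₀-r), (flC x t)^2 :=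
      intervalIntegral.integral_nonneg (by linarith [hmem_minus.1]) (fun x _ => sq_nonneg _)
    have n3 : (0:ℝ) ≤ ∫ x in (x₀+r)..a, (flC x t)^2 :=
      intervalIntegral.integral_nonneg (by linarith [hmem_plus.2]) (fun x _ => sq_nonneg _)
    linarith [e1, e2, n1, n3]
  have hNa : N ≤ ∫ t in t₁..t₂, ∫ x in (-a)..a, (flC x t)^2 := by
    rw [hNdef]
    exact intervalIntegral.integral_mono_on (μ := volume) ht12.le
      (cont_t_sq.intervalIntegrable _ _) (cont_t_sqa.intervalIntegrable _ _)
      (fun t _ => hNsub t)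
  have hNT : (∫ t in t₁..t₂, ∫ x in (-a)..a, (flC x t)^2)
      ≤ ∫ t in (0:ℝ)..T, ∫ x in (-a)..a, (flC x t)^2 := by
    have j1 : IntervalIntegrable (fun t => ∫ x in (-a)..a, (flC x t)^2) volume 0 t₁ :=
      cont_t_sqa.intervalIntegrable _ _
    have j2 : IntervalIntegrable (fun t => ∫ x in (-a)..a, (flC x t)^2) volume t₁ t₂ :=
      cont_t_sqa.intervalIntegrable _ _
    have j3 : IntervalIntegrable (fun t => ∫ x in (-a)..a, (flC x t)^2) volume t₂ T :=
      cont_t_sqa.intervalIntegrable _ _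
    have e1 := intervalIntegral.integral_add_adjacent_intervals j1 j2
    have e2 := intervalIntegral.integral_add_adjacent_intervals (j1.trans j2) j3
    have n1 : (0:ℝ) ≤ ∫ t in (0:ℝ)..t₁, ∫ x in (-a)..a, (flC x t)^2 :=
      intervalIntegral.integral_nonneg ht₁ (fun t _ => hinner_nonneg t)
    have n3 : (0:ℝ) ≤ ∫ t in t₂..T, ∫ x in (-a)..a, (flC x t)^2 :=
      intervalIntegral.integral_nonneg ht₂ (fun t _ => hinner_nonneg t)
    linarith [e1, e2, n1, n3]
  have hXF : (∫ t in (0:ℝ)..T, ∫ x in (-a)..a, (flC x t)^2) = F^2 := by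
    have congrT : (∫ t in (0:ℝ)..T, ∫ x in (-a)..a, (flC x t)^2)
        = ∫ t in (0:ℝ)..T, ∫ x in (-a)..a, (fl x t)^2 := by
      apply intervalIntegral.integral_congr
      intro t htu
      rw [Set.uIcc_of_le hT0] at htu
      show (∫ x in (-a)..a, (flC x t)^2) = ∫ x in (-a)..a, (fl x t)^2
      apply intervalIntegral.integral_congr
      intro x _
      show (flC x t)^2 = (fl x t)^2
      rw [flC_eq x t htu]
    have hFdef' : Real.sqrt (∫ t in (0:ℝ)..T, ∫ x in (-a)..a, (fl x t)^2) = F := hFdef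
    have hX0 : (0:ℝ) ≤ ∫ t in (0:ℝ)..T, ∫ x in (-a)..a, (fl x t)^2 := by
      apply intervalIntegral.integral_nonneg hT0
      intro t _
      exact intervalIntegral.integral_nonneg (by linarith) (fun x _ => sq_nonneg _)
    rw [congrT, ← hFdef', Real.sq_sqrt hX0]
  have hNF : N ≤ F^2 := by linarith [hNa, hNT, hXF]
  -- final inequality
  have final : A * r^2/2 ≤ Real.sqrt (2*r*τ) * (F+1) := by
    have c1 : A * r^2/2 ≤ (lam * N + (1/lam)*(2*r)*τ)/2 := by
      calc A * r^2/2
          ≤ ∫ ρ in (0:ℝ)..r, ∫ t in t₁..t₂, (|flC (x₀+ρ) t| + |flC (x₀-ρ) t|) := key3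
        _ = ∫ t in t₁..t₂, ∫ x in (x₀-r)..(x₀+r), |flC x t| := key4
        _ ≤ _ := keyCS
    have c2 : lam * N ≤ lam * F^2 := mul_le_mul_of_nonneg_left hNF hlam.le
    have c3 : lam * F^2 ≤ Real.sqrt (2*r*τ) * (F+1) := by
      rw [hlamdef]
      calc Real.sqrt (2*r*τ)/(F+1) * F^2
          = Real.sqrt (2*r*τ) * (F^2/(F+1)) := by ring
        _ ≤ Real.sqrt (2*r*τ) * (F+1) := by
            apply mul_le_mul_of_nonneg_left _ (Real.sqrt_nonneg _)
            rw [div_le_iff₀ hF1]; nlinarith only [hF0]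
    have c4 : (1/lam)*(2*r)*τ = Real.sqrt (2*r*τ) * (F+1) := by
      rw [hlamdef, one_div_div]
      calc (F+1)/Real.sqrt (2*r*τ) * (2*r) * τ
          = (F+1) * ((2*r*τ)/Real.sqrt (2*r*τ)) := by ring
        _ = (F+1) * Real.sqrt (2*r*τ) := by rw [Real.div_sqrt]
        _ = Real.sqrt (2*r*τ) * (F+1) := mul_comm _ _
    linarith [c1, c2, c3, c4]
  -- numeric contradiction
  have h2 : Real.sqrt 2 ^ 2 = 2 := Real.sq_sqrt (by norm_num)
  have hsqrt2 : Real.sqrt (2*r*τ) = Mbar * u^5/(4*K₃) * Real.sqrt 2 := by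
    have e : 2*r*τ = (Mbar * u^5/(4*K₃) * Real.sqrt 2)^2 := by
      rw [hτ8, hrdef, mul_pow, h2]
      field_simp
      ring
    rw [e, Real.sqrt_sq (by positivity)]
  rw [hsqrt2] at final
  have hL : A * r^2/2 = Mbar^5 * u^5/(512*K₃^4) := by
    rw [hAdef, hrdef]; field_simp; ring
  rw [hL] at final
  have final2 : Mbar^5*u^5 ≤ 128*Real.sqrt 2*K₃^3*(F+1)*(Mbar*u^5) := by
    rw [div_le_iff₀ (by positivity : (0:ℝ) < 512*K₃^4)] at final
    have e : Mbar*u^5/(4*K₃)*Real.sqrt 2*(F+1)*(512*K₃^4)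
        = 128*Real.sqrt 2*K₃^3*(F+1)*(Mbar*u^5) := by
      field_simp; ring
    linarith [final, e]
  have hMb4le : Mbar^4 ≤ 128*Real.sqrt 2*K₃^3*(F+1) := by
    apply le_of_mul_le_mul_right _ (by positivity : (0:ℝ) < Mbar*u^5)
    calc Mbar^4*(Mbar*u^5) = Mbar^5*u^5 := by ring
      _ ≤ 128*Real.sqrt 2*K₃^3*(F+1)*(Mbar*u^5) := final2
  have hs2 : Real.sqrt 2 < 2 :=
    (Real.sqrt_lt' (by norm_num)).mpr (by norm_num)
  have hKF : (0:ℝ) < K₃^3*(F+1) := by positivity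
  have hprod := mul_pos hKF (sub_pos.mpr hs2)
  linarith only [hMb4le, hMbar4, hKF, hprod]
end

section
/- Let h be a classical periodic solution of the regularized Model I equation on [0,T], and fix any A > 0. Then for every T′ ∈ [0,T] the entropy identity holds: ∫_{−a}^{a} G_ε(h(x,T′)) dx + S·∫_0^{T′} ∫_{−a}^{a} h_xx² dx dt = ∫_{−a}^{a} G_ε(h(x,0)) dx + S·∫_0^{T′} ∫_{−a}^{a} h_x² dx dt. -/
/-- `g_ε(s) = -∫_s^A dr / (|r|³ + ε)`. -/
noncomputable def gEps (A ε s : ℝ) : ℝ := -∫ r in s..A, 1 / (|r| ^ 3 + ε)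

/-- `G_ε(s) = -∫_s^A g_ε(r) dr`. -/
noncomputable def GEps (A ε s : ℝ) : ℝ := -∫ r in s..A, gEps A ε r

open MeasureTheory

lemma cont_inv_cube {ε : ℝ} (hε : 0 < ε) : Continuous fun r : ℝ => 1 / (|r| ^ 3 + ε) := by
  apply Continuous.div continuous_const ((continuous_abs.pow 3).add continuous_const)
  intro x
  exact (add_pos_of_nonneg_of_pos (pow_nonneg (abs_nonneg x) 3) hε).ne'

lemma gEps_eq (A ε s : ℝ) : gEps A ε s = ∫ r in A..s, 1 / (|r| ^ 3 + ε) := by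
  rw [gEps, intervalIntegral.integral_symm, neg_neg]

lemma hasDerivAt_gEps (A : ℝ) {ε : ℝ} (hε : 0 < ε) (s : ℝ) :
    HasDerivAt (gEps A ε) (1 / (|s| ^ 3 + ε)) s := by
  have hc := cont_inv_cube hε
  have := intervalIntegral.integral_hasDerivAt_right
    (hc.intervalIntegrable A s) (hc.stronglyMeasurableAtFilter _ _) hc.continuousAt
  exact this.congr_of_eventuallyEq (by filter_upwards with u; rw [gEps_eq])

lemma continuous_gEps (A : ℝ) {ε : ℝ} (hε : 0 < ε) : Continuous (gEps A ε) :=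
  continuous_iff_continuousAt.2 fun s => (hasDerivAt_gEps A hε s).continuousAt

lemma GEps_eq (A ε s : ℝ) : GEps A ε s = ∫ r in A..s, gEps A ε r := by
  rw [GEps, intervalIntegral.integral_symm, neg_neg]

lemma hasDerivAt_GEps (A : ℝ) {ε : ℝ} (hε : 0 < ε) (s : ℝ) :
    HasDerivAt (GEps A ε) (gEps A ε s) s := by
  have hc := continuous_gEps A hε
  have := intervalIntegral.integral_hasDerivAt_right
    (hc.intervalIntegrable A s) (hc.stronglyMeasurableAtFilter _ _) hc.continuousAt
  exact this.congr_of_eventuallyEq (by filter_upwards with u; rw [GEps_eq])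

lemma continuous_GEps (A : ℝ) {ε : ℝ} (hε : 0 < ε) : Continuous (GEps A ε) :=
  continuous_iff_continuousAt.2 fun s => (hasDerivAt_GEps A hε s).continuousAt

/-- Antiderivative of `s ↦ s g_ε(s)`. -/
noncomputable def PhiI (A ε s : ℝ) : ℝ := ∫ r in A..s, r * gEps A ε r

lemma hasDerivAt_PhiI (A : ℝ) {ε : ℝ} (hε : 0 < ε) (s : ℝ) :
    HasDerivAt (PhiI A ε) (s * gEps A ε s) s := by
  have hc : Continuous fun r => r * gEps A ε r := continuous_id.mul (continuous_gEps A hε)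
  exact intervalIntegral.integral_hasDerivAt_right
    (hc.intervalIntegrable A s) (hc.stronglyMeasurableAtFilter _ _) hc.continuousAt

/-- Fubini for interval integrals of a function continuous on a rectangle. -/
lemma interval_integral_swap {F : ℝ → ℝ → ℝ} {a b c d : ℝ} (hab : a ≤ b) (hcd : c ≤ d)
    (hF : ContinuousOn (fun p : ℝ × ℝ => F p.1 p.2) (Set.Icc a b ×ˢ Set.Icc c d)) :
    (∫ x in a..b, ∫ t in c..d, F x t) = ∫ t in c..d, ∫ x in a..b, F x t := by
  have hint : IntegrableOn (Function.uncurry F) (Set.Icc a b ×ˢ Set.Icc c d)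
      (volume.prod volume) := by
    rw [← Measure.volume_eq_prod]
    exact hF.integrableOn_compact (IsCompact.prod isCompact_Icc isCompact_Icc)
  have hint2 : Integrable (Function.uncurry F)
      ((volume.restrict (Set.Ioc a b)).prod (volume.restrict (Set.Ioc c d))) := by
    rw [Measure.prod_restrict]
    exact hint.mono_set (Set.prod_mono Set.Ioc_subset_Icc_self Set.Ioc_subset_Icc_self)
  have := MeasureTheory.integral_integral_swap hint2
  simp only [intervalIntegral.integral_of_le hab, intervalIntegral.integral_of_le hcd]
  exact this

/-- Entropy identity for regularized Model I:
`∫ G_ε(h(·,T')) + S∫₀^{T'}∫ h_xx² = ∫ G_ε(h(·,0)) + S∫₀^{T'}∫ h_x²`. -/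
theorem modelI_entropy_identity
    (a S ε T A : ℝ) (ha : 0 < a) (hS : 0 < S) (hε : 0 < ε) (hT : 0 < T) (hA : 0 < A)
    (h hx hxx hxxx hxxxx ht : ℝ → ℝ → ℝ)
    (hsol : ClassicalSolutionI a S ε T h hx hxx hxxx hxxxx ht) :
    ∀ T' ∈ Set.Icc (0:ℝ) T,
      (∫ x in (-a)..a, GEps A ε (h x T'))
        + S * ∫ t in (0:ℝ)..T', ∫ x in (-a)..a, (hxx x t)^2
      = (∫ x in (-a)..a, GEps A ε (h x 0))
        + S * ∫ t in (0:ℝ)..T', ∫ x in (-a)..a, (hx x t)^2 := by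
  intro T' hT'mem
  obtain ⟨hT'0, hT'T⟩ := hT'mem
  -- continuity in x for fixed t, and in t for fixed x
  have contx : ∀ {f : ℝ → ℝ → ℝ},
      ContinuousOn (fun p : ℝ × ℝ => f p.1 p.2) (Set.univ ×ˢ Set.Icc 0 T) →
      ∀ {t : ℝ}, t ∈ Set.Icc (0:ℝ) T → Continuous fun x => f x t := by
    intro f hf t htm
    exact hf.comp_continuous (continuous_id.prodMk continuous_const)
      (fun x => by simp [htm])
  have contt : ∀ {f : ℝ → ℝ → ℝ},
      ContinuousOn (fun p : ℝ × ℝ => f p.1 p.2) (Set.univ ×ˢ Set.Icc 0 T) →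
      ∀ x : ℝ, ContinuousOn (fun s => f x s) (Set.Icc (0:ℝ) T) := by
    intro f hf x
    exact hf.comp ((continuous_const.prodMk continuous_id).continuousOn)
      (fun s hs => by simp [hs])
  -- periodicity of spatial derivatives
  have per_hx : ∀ (t : ℝ), t ∈ Set.Icc (0:ℝ) T → ∀ x, hx (x + 2*a) t = hx x t := by
    intro t htm x
    have h1 : HasDerivAt (fun y => h (y + 2*a) t) (hx (x + 2*a) t * 1) x :=
      by have := (hsol.deriv_hx (x + 2*a) t htm).comp x ((hasDerivAt_id x).add_const (2*a)); exact this
    have h2 : HasDerivAt (fun y => h y t) (hx (x + 2*a) t * 1) x := by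
      simpa only [hsol.periodic_x] using h1
    have := h2.unique (hsol.deriv_hx x t htm)
    linarith [this]
  have per_hxx : ∀ (t : ℝ), t ∈ Set.Icc (0:ℝ) T → ∀ x, hxx (x + 2*a) t = hxx x t := by
    intro t htm x
    have h1 : HasDerivAt (fun y => hx (y + 2*a) t) (hxx (x + 2*a) t * 1) x :=
      by have := (hsol.deriv_hxx (x + 2*a) t htm).comp x ((hasDerivAt_id x).add_const (2*a)); exact this
    have h2 : HasDerivAt (fun y => hx y t) (hxx (x + 2*a) t * 1) x := by
      have e : (fun y => hx (y + 2*a) t) = fun y => hx y t := funext fun y => per_hx t htm y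
      rwa [e] at h1
    have := h2.unique (hsol.deriv_hxx x t htm)
    linarith [this]
  have per_hxxx : ∀ (t : ℝ), t ∈ Set.Icc (0:ℝ) T → ∀ x, hxxx (x + 2*a) t = hxxx x t := by
    intro t htm x
    have h1 : HasDerivAt (fun y => hxx (y + 2*a) t) (hxxx (x + 2*a) t * 1) x :=
      by have := (hsol.deriv_hxxx (x + 2*a) t htm).comp x ((hasDerivAt_id x).add_const (2*a)); exact this
    have h2 : HasDerivAt (fun y => hxx y t) (hxxx (x + 2*a) t * 1) x := by
      have e : (fun y => hxx (y + 2*a) t) = fun y => hxx y t := funext fun y => per_hxx t htm y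
      rwa [e] at h1
    have := h2.unique (hsol.deriv_hxxx x t htm)
    linarith [this]
  have neg_a_add : (-a : ℝ) + 2*a = a := by ring
  -- the key spatial identity at each fixed time
  have spatial : ∀ (t : ℝ), t ∈ Set.Icc (0:ℝ) T →
      (∫ x in (-a)..a, gEps A ε (h x t) * ht x t)
        = S * ((∫ x in (-a)..a, (hx x t)^2) - ∫ x in (-a)..a, (hxx x t)^2) := by
    intro t htm
    set W : ℝ → ℝ := fun y =>
      -(PhiI A ε (h y t)) - gEps A ε (h y t) * (S * ((|h y t| ^ 3 + ε) * (hx y t + hxxx y t)))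
        + S * (hx y t * hxx y t) with hW_def
    have hW : ∀ y : ℝ, HasDerivAt W
        (gEps A ε (h y t) * ht y t - S * ((hx y t)^2 - (hxx y t)^2)) y := by
      intro y
      have dh := hsol.deriv_hx y t htm
      have dPhi : HasDerivAt (fun z => PhiI A ε (h z t))
          (h y t * gEps A ε (h y t) * hx y t) y :=
        by have := (hasDerivAt_PhiI A hε (h y t)).comp y dh; exact this
      have dg : HasDerivAt (fun z => gEps A ε (h z t))
          (1 / (|h y t| ^ 3 + ε) * hx y t) y :=
        by have := (hasDerivAt_gEps A hε (h y t)).comp y dh; exact this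
      have dflux := hsol.pde y t htm
      have dlast : HasDerivAt (fun z => S * (hx z t * hxx z t))
          (S * (hxx y t * hxx y t + hx y t * hxxx y t)) y :=
        ((hsol.deriv_hxx y t htm).mul (hsol.deriv_hxxx y t htm)).const_mul S
      have dW := ((dPhi.neg.sub (dg.mul dflux)).add dlast)
      have hD : (|h y t| ^ 3 + ε) ≠ 0 := by positivity
      refine dW.congr_deriv ?_
      have e : 1 / (|h y t| ^ 3 + ε) * (|h y t| ^ 3 + ε) = 1 := by field_simp
      linear_combination (-(S * hx y t * (hx y t + hxxx y t))) * e
    have hderiv_cont : Continuous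
        (fun y => gEps A ε (h y t) * ht y t - S * ((hx y t)^2 - (hxx y t)^2)) := by
      have c1 : Continuous fun y => h y t := contx hsol.cont_h htm
      have c2 : Continuous fun y => ht y t := contx hsol.cont_ht htm
      have c3 : Continuous fun y => hx y t := contx hsol.cont_hx htm
      have c4 : Continuous fun y => hxx y t := contx hsol.cont_hxx htm
      exact (((continuous_gEps A hε).comp c1).mul c2).sub
        (continuous_const.mul ((c3.pow 2).sub (c4.pow 2)))
    have key := intervalIntegral.integral_eq_sub_of_hasDerivAt
      (f := W) (a := -a) (b := a) (fun y _ => hW y)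
      (hderiv_cont.intervalIntegrable _ _)
    have Wper : W a = W (-a) := by
      have e1 : h a t = h (-a) t := by
        have := hsol.periodic_x (-a) t; rwa [neg_a_add] at this
      have e2 : hx a t = hx (-a) t := by
        have := per_hx t htm (-a); rwa [neg_a_add] at this
      have e3 : hxx a t = hxx (-a) t := by
        have := per_hxx t htm (-a); rwa [neg_a_add] at this
      have e4 : hxxx a t = hxxx (-a) t := by
        have := per_hxxx t htm (-a); rwa [neg_a_add] at this
      simp only [hW_def, e1, e2, e3, e4]
    rw [Wper, sub_self] at key
    have c3 : Continuous fun y => hx y t := contx hsol.cont_hx htm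
    have c4 : Continuous fun y => hxx y t := contx hsol.cont_hxx htm
    have i1 : IntervalIntegrable (fun y => gEps A ε (h y t) * ht y t) volume (-a) a :=
      ((((continuous_gEps A hε).comp (contx hsol.cont_h htm)).mul
        (contx hsol.cont_ht htm))).intervalIntegrable _ _
    have i3 : IntervalIntegrable (fun y => (hx y t)^2) volume (-a) a :=
      (c3.pow 2).intervalIntegrable _ _
    have i4 : IntervalIntegrable (fun y => (hxx y t)^2) volume (-a) a :=
      (c4.pow 2).intervalIntegrable _ _
    have i2 : IntervalIntegrable (fun y => S * ((hx y t)^2 - (hxx y t)^2)) volume (-a) a :=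
      ((i3.sub i4).const_mul S)
    have split := intervalIntegral.integral_sub i1 i2
    rw [key] at split
    have : (∫ x in (-a)..a, gEps A ε (h x t) * ht x t)
        = ∫ x in (-a)..a, S * ((hx x t)^2 - (hxx x t)^2) := by
      have := sub_eq_zero.mp split.symm
      linarith [this]
    rw [this, intervalIntegral.integral_const_mul, intervalIntegral.integral_sub i3 i4]
  -- time FTC at each fixed x
  have timeFTC : ∀ x : ℝ,
      GEps A ε (h x T') - GEps A ε (h x 0)
        = ∫ t in (0:ℝ)..T', gEps A ε (h x t) * ht x t := by
    intro x
    have hsub : Set.Icc (0:ℝ) T' ⊆ Set.Icc (0:ℝ) T := Set.Icc_subset_Icc le_rfl hT'T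
    have hcont : ContinuousOn (fun s => GEps A ε (h x s)) (Set.Icc 0 T') :=
      (continuous_GEps A hε).comp_continuousOn ((contt hsol.cont_h x).mono hsub)
    have hderiv : ∀ s ∈ Set.Ioo (0:ℝ) T',
        HasDerivAt (fun u => GEps A ε (h x u)) (gEps A ε (h x s) * ht x s) s := by
      intro s hs
      have hsmem : s ∈ Set.Icc (0:ℝ) T := ⟨hs.1.le, hs.2.le.trans hT'T⟩
      have hnd : Set.Icc (0:ℝ) T ∈ nhds s :=
        Icc_mem_nhds hs.1 (lt_of_lt_of_le hs.2 hT'T)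
      have hda : HasDerivAt (fun u => h x u) (ht x s) s :=
        (hsol.deriv_ht x s hsmem).hasDerivAt hnd
      exact (hasDerivAt_GEps A hε (h x s)).comp s hda
    have hint : IntervalIntegrable (fun s => gEps A ε (h x s) * ht x s) volume 0 T' := by
      apply ContinuousOn.intervalIntegrable
      rw [Set.uIcc_of_le hT'0]
      exact (((continuous_gEps A hε).comp_continuousOn
        ((contt hsol.cont_h x).mono hsub)).mul ((contt hsol.cont_ht x).mono hsub))
    exact (intervalIntegral.integral_eq_sub_of_hasDerivAt_of_le hT'0 hcont hderiv hint).symm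
  -- integrate the time FTC in x
  have iGT' : IntervalIntegrable (fun x => GEps A ε (h x T')) volume (-a) a :=
    (((continuous_GEps A hε).comp (contx hsol.cont_h ⟨hT'0, hT'T⟩))).intervalIntegrable _ _
  have iG0 : IntervalIntegrable (fun x => GEps A ε (h x 0)) volume (-a) a :=
    (((continuous_GEps A hε).comp (contx hsol.cont_h ⟨le_rfl, hT.le⟩))).intervalIntegrable _ _
  have left_eq : (∫ x in (-a)..a, GEps A ε (h x T')) - (∫ x in (-a)..a, GEps A ε (h x 0))
      = ∫ x in (-a)..a, ∫ t in (0:ℝ)..T', gEps A ε (h x t) * ht x t := by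
    rw [← intervalIntegral.integral_sub iGT' iG0]
    exact intervalIntegral.integral_congr fun x _ => timeFTC x
  -- Fubini
  have hsub2 : Set.Icc (-a) a ×ˢ Set.Icc (0:ℝ) T' ⊆ Set.univ ×ˢ Set.Icc (0:ℝ) T :=
    Set.prod_mono (Set.subset_univ _) (Set.Icc_subset_Icc le_rfl hT'T)
  have swap : (∫ x in (-a)..a, ∫ t in (0:ℝ)..T', gEps A ε (h x t) * ht x t)
      = ∫ t in (0:ℝ)..T', ∫ x in (-a)..a, gEps A ε (h x t) * ht x t := by
    apply interval_integral_swap (by linarith) hT'0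
    exact (((continuous_gEps A hε).comp_continuousOn (hsol.cont_h.mono hsub2)).mul
      (hsol.cont_ht.mono hsub2))
  -- apply the spatial identity under the time integral
  have rhs_eq : (∫ t in (0:ℝ)..T', ∫ x in (-a)..a, gEps A ε (h x t) * ht x t)
      = ∫ t in (0:ℝ)..T',
          S * ((∫ x in (-a)..a, (hx x t)^2) - ∫ x in (-a)..a, (hxx x t)^2) := by
    apply intervalIntegral.integral_congr
    intro t htm
    rw [Set.uIcc_of_le hT'0] at htm
    exact spatial t ⟨htm.1, htm.2.trans hT'T⟩
  -- integrability in time of the parametric integrals, via clamping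
  have proj_cont : Continuous fun t : ℝ => min (max t 0) T :=
    (continuous_id.max continuous_const).min continuous_const
  have proj_mem : ∀ t : ℝ, min (max t 0) T ∈ Set.Icc (0:ℝ) T :=
    fun t => ⟨le_min (le_max_right t 0) hT.le, min_le_right _ _⟩
  have proj_eq : ∀ t ∈ Set.Icc (0:ℝ) T', min (max t 0) T = t := by
    intro t htm
    rw [max_eq_left htm.1, min_eq_left (htm.2.trans hT'T)]
  have clamp : ∀ {f : ℝ → ℝ → ℝ},
      ContinuousOn (fun p : ℝ × ℝ => f p.1 p.2) (Set.univ ×ˢ Set.Icc 0 T) →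
      IntervalIntegrable (fun t => ∫ x in (-a)..a, (f x t)^2) volume 0 T' := by
    intro f hf
    apply ContinuousOn.intervalIntegrable
    rw [Set.uIcc_of_le hT'0]
    have hc : Continuous fun t : ℝ => ∫ x in (-a)..a, (f x (min (max t 0) T))^2 := by
      apply intervalIntegral.continuous_parametric_intervalIntegral_of_continuous'
      have : Continuous fun p : ℝ × ℝ => f p.2 (min (max p.1 0) T) :=
        hf.comp_continuous (continuous_snd.prodMk (proj_cont.comp continuous_fst))
          (fun p => by simpa using proj_mem p.1)
      exact this.pow 2
    apply hc.continuousOn.congr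
    intro t htm
    simp only [proj_eq t htm]
  have intIx : IntervalIntegrable (fun t => ∫ x in (-a)..a, (hx x t)^2) volume 0 T' :=
    clamp hsol.cont_hx
  have intIxx : IntervalIntegrable (fun t => ∫ x in (-a)..a, (hxx x t)^2) volume 0 T' :=
    clamp hsol.cont_hxx
  have final_split : (∫ t in (0:ℝ)..T',
        S * ((∫ x in (-a)..a, (hx x t)^2) - ∫ x in (-a)..a, (hxx x t)^2))
      = S * ((∫ t in (0:ℝ)..T', ∫ x in (-a)..a, (hx x t)^2)
          - ∫ t in (0:ℝ)..T', ∫ x in (-a)..a, (hxx x t)^2) := by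
    rw [intervalIntegral.integral_const_mul, intervalIntegral.integral_sub intIx intIxx]
  have chain := left_eq.trans (swap.trans (rhs_eq.trans final_split))
  linarith [chain]
end
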